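/- arXiv:1507.05506 — 7 statements merged into one kernel-verified Lean document; each statement's English description precedes it below -/
import Mathlib

section
/- Let d = gcd(n₁-1, n₂-1). The quantity (n₁-1)(n₂-1)/d² is even if and only if n₁n₂ ≡ d+1 (mod 2d). -/
/-- Let `d = gcd(n₁-1, n₂-1)`. Then `(n₁-1)(n₂-1)/d²` is even iff
`n₁n₂ ≡ d+1 (mod 2d)`. -/
theorem even_iff_product_congruence (n₁ n₂ d : ℕ)
    (hp₁ : n₁.Prime) (hp₂ : n₂.Prime) (ho₁ : Odd n₁) (ho₂ : Odd n₂) (hne : n₁ ≠ n₂)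
    (hd : d = Nat.gcd (n₁ - 1) (n₂ - 1)) :
    Even ((n₁ - 1) * (n₂ - 1) / d ^ 2) ↔ n₁ * n₂ ≡ d + 1 [MOD 2 * d] := by
  have h1 : 2 ≤ n₁ := hp₁.two_le
  have h2 : 2 ≤ n₂ := hp₂.two_le
  have hea : Even (n₁ - 1) := Nat.Odd.sub_odd ho₁ odd_one
  have heb : Even (n₂ - 1) := Nat.Odd.sub_odd ho₂ odd_one
  have hda : d ∣ (n₁ - 1) := hd ▸ Nat.gcd_dvd_left _ _
  have hdb : d ∣ (n₂ - 1) := hd ▸ Nat.gcd_dvd_right _ _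
  have h2d : 2 ∣ d := hd ▸ Nat.dvd_gcd hea.two_dvd heb.two_dvd
  have hdpos : 0 < d := by
    rw [hd]; exact Nat.gcd_pos_of_pos_left _ (by omega)
  obtain ⟨f, hf⟩ := hda
  obtain ⟨g, hg⟩ := hdb
  have hfd : f = (n₁ - 1) / d := by rw [hf, Nat.mul_div_cancel_left _ hdpos]
  have hgd : g = (n₂ - 1) / d := by rw [hg, Nat.mul_div_cancel_left _ hdpos]
  have hcop : Nat.Coprime f g := by
    rw [hfd, hgd, hd]
    exact Nat.coprime_div_gcd_div_gcd (by rw [← hd]; exact hdpos)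
  have hdiv : (n₁ - 1) * (n₂ - 1) / d ^ 2 = f * g := by
    rw [hf, hg, show d * f * (d * g) = d ^ 2 * (f * g) by ring,
      Nat.mul_div_cancel_left _ (by positivity)]
  rw [hdiv]
  set K := d * f * g + f + g with hK
  have hmul : n₁ * n₂ = d * K + 1 := by
    have e1 : n₁ = d * f + 1 := by omega
    have e2 : n₂ = d * g + 1 := by omega
    rw [e1, e2, hK]; ring
  have step1 : (n₁ * n₂ ≡ d + 1 [MOD 2 * d]) ↔ (d * K ≡ d * 1 [MOD d * 2]) := by
    rw [hmul, show d + 1 = d * 1 + 1 by ring, show 2 * d = d * 2 by ring]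
    constructor
    · exact fun h => h.add_right_cancel' 1
    · exact fun h => h.add_right 1
  have step2 : (d * K ≡ d * 1 [MOD d * 2]) ↔ K % 2 = 1 % 2 := by
    unfold Nat.ModEq
    rw [Nat.mul_mod_mul_left, Nat.mul_mod_mul_left]
    constructor
    · exact fun h => Nat.eq_of_mul_eq_mul_left hdpos h
    · exact fun h => by rw [h]
  obtain ⟨e, he⟩ := h2d
  have hKmod : K % 2 = (f + g) % 2 := by
    rw [hK, he, show 2 * e * f * g + f + g = 2 * (e * f * g) + (f + g) by ring,
      Nat.mul_add_mod]
  rw [step1, step2, hKmod]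
  have hnotboth : ¬ (f % 2 = 0 ∧ g % 2 = 0) := by
    rintro ⟨hf0, hg0⟩
    have : 2 ∣ Nat.gcd f g := Nat.dvd_gcd (Nat.dvd_of_mod_eq_zero hf0)
      (Nat.dvd_of_mod_eq_zero hg0)
    rw [hcop] at this
    omega
  rw [Nat.even_mul, Nat.even_iff, Nat.even_iff]
  omega
end

section
/- Each Whiteman cyclotomic class W_j, when reduced modulo n₁, covers each element of {1, 2, ..., n₁-1} exactly (n₂-1)/d times. -/
lemma count_range_mod (m k r : ℕ) (hr : r < m) :
    ((Finset.range (m * k)).filter (fun s => s % m = r)).card = k := by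
  have hm : 0 < m := lt_of_le_of_lt (Nat.zero_le r) hr
  have himg : (Finset.range (m * k)).filter (fun s => s % m = r) =
      (Finset.range k).image (fun t => t * m + r) := by
    ext s
    simp only [Finset.mem_filter, Finset.mem_range, Finset.mem_image]
    constructor
    · rintro ⟨hs, hsr⟩
      refine ⟨s / m, Nat.div_lt_of_lt_mul hs, ?_⟩
      have hdm := Nat.div_add_mod s m
      have hc := Nat.mul_comm m (s / m)
      omega
    · rintro ⟨t, ht, rfl⟩
      constructor
      · calc t * m + r < t * m + m := by omega
          _ = (t + 1) * m := by ring
          _ ≤ k * m := Nat.mul_le_mul_right m ht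
          _ = m * k := Nat.mul_comm k m
      · rw [Nat.mul_comm, Nat.mul_add_mod, Nat.mod_eq_of_lt hr]
  rw [himg, Finset.card_image_of_injective _
      (fun a b hab => Nat.eq_of_mul_eq_mul_right hm (Nat.add_right_cancel hab)),
    Finset.card_range]

/-- Each Whiteman cyclotomic class `W_j = {g^s u^j mod n : 0 ≤ s ≤ e-1}`, reduced modulo
`n₁`, covers each element of `{1, …, n₁-1}` exactly `(n₂-1)/d` times. -/
theorem whitemanClass_mod_count (n₁ n₂ n d e : ℕ)
    (hp₁ : n₁.Prime) (hp₂ : n₂.Prime) (ho₁ : Odd n₁) (ho₂ : Odd n₂) (hne : n₁ ≠ n₂)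
    (hn : n = n₁ * n₂) (hd : d = Nat.gcd (n₁ - 1) (n₂ - 1))
    (he : e = (n₁ - 1) * (n₂ - 1) / d)
    (g u : ℕ)
    (hg₁ : orderOf (g : ZMod n₁) = n₁ - 1) (hg₂ : orderOf (g : ZMod n₂) = n₂ - 1)
    (hu₁ : u ≡ g [MOD n₁]) (hu₂ : u ≡ 1 [MOD n₂])
    (j : ℕ) (hj : j < d) (a : ℕ) (ha₁ : 1 ≤ a) (ha₂ : a ≤ n₁ - 1) :
    ((Finset.range e).filter (fun s => (g ^ s * u ^ j) % n % n₁ = a)).card =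
      (n₂ - 1) / d := by
  haveI : Fact n₁.Prime := ⟨hp₁⟩
  set m := n₁ - 1 with hm_def
  set k := (n₂ - 1) / d with hk_def
  have hn₁2 : 2 ≤ n₁ := hp₁.two_le
  have hm : 0 < m := by omega
  have hdpos : 0 < d := by
    rw [hd]
    exact Nat.gcd_pos_of_pos_left _ (by have := hp₂.two_le; omega)
  have hdvd : d ∣ n₂ - 1 := hd ▸ Nat.gcd_dvd_right _ _
  have hek : e = m * k := by
    rw [he, hk_def, Nat.mul_div_assoc _ hdvd]
  -- the ZMod n₁ picture
  set γ : ZMod n₁ := (g : ZMod n₁) with hγ_def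
  have hγord : orderOf γ = m := hg₁
  have hγ0 : γ ≠ 0 := by
    intro h
    rw [h] at hγord
    have : orderOf (0 : ZMod n₁) = 0 := by
      rw [orderOf_eq_zero_iff]
      intro hfin
      obtain ⟨c, hc, hc1⟩ := hfin.exists_pow_eq_one
      rw [zero_pow (by omega)] at hc1
      exact zero_ne_one hc1
    omega
  have hα0 : (a : ZMod n₁) ≠ 0 := by
    rw [Ne, ZMod.natCast_eq_zero_iff]
    intro hdvd'
    have := Nat.le_of_dvd (by omega) hdvd'
    omega
  set γᵤ : (ZMod n₁)ˣ := Units.mk0 γ hγ0 with hγᵤ_def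
  set αᵤ : (ZMod n₁)ˣ := Units.mk0 _ hα0 with hαᵤ_def
  have hγᵤord : orderOf γᵤ = m := by
    rw [← hγord, ← orderOf_units]; rfl
  -- every unit is a power of γᵤ
  have hcardu : Fintype.card (ZMod n₁)ˣ = m := by
    rw [ZMod.card_units_eq_totient, Nat.totient_prime hp₁]
  have hsurj : ∃ t₀, t₀ < m ∧ γᵤ ^ t₀ = αᵤ := by
    have himg : ((Finset.range m).image (fun t => γᵤ ^ t)) = Finset.univ := by
      apply Finset.eq_univ_of_card
      rw [hcardu, Finset.card_image_of_injOn, Finset.card_range]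
      intro x hx y hy hxy
      exact pow_injOn_Iio_orderOf (by simpa [hγᵤord] using Finset.mem_range.mp (Finset.mem_coe.mp hx))
        (by simpa [hγᵤord] using Finset.mem_range.mp (Finset.mem_coe.mp hy)) hxy
    have : αᵤ ∈ ((Finset.range m).image (fun t => γᵤ ^ t)) := himg ▸ Finset.mem_univ _
    obtain ⟨t₀, ht₀, ht₀'⟩ := Finset.mem_image.mp this
    exact ⟨t₀, Finset.mem_range.mp ht₀, ht₀'⟩
  obtain ⟨t₀, ht₀m, ht₀⟩ := hsurj
  -- rewrite the condition
  have hn₁dvd : n₁ ∣ n := ⟨n₂, hn⟩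
  have hcond : ∀ s : ℕ, ((g ^ s * u ^ j) % n % n₁ = a) ↔ (s % m = (t₀ + m * j - j) % m) := by
    intro s
    rw [Nat.mod_mod_of_dvd _ hn₁dvd]
    have han : a % n₁ = a := Nat.mod_eq_of_lt (by omega)
    have step1 : (g ^ s * u ^ j) % n₁ = a ↔ ((g ^ s * u ^ j : ℕ) : ZMod n₁) = (a : ZMod n₁) := by
      rw [ZMod.natCast_eq_natCast_iff]
      unfold Nat.ModEq
      rw [han]
    have hu : (u : ZMod n₁) = γ := by
      show (u : ZMod n₁) = ((g : ℕ) : ZMod n₁)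
      exact (ZMod.natCast_eq_natCast_iff _ _ _).mpr hu₁
    have step2 : ((g ^ s * u ^ j : ℕ) : ZMod n₁) = (a : ZMod n₁) ↔ γ ^ (s + j) = (a : ZMod n₁) := by
      push_cast
      rw [hu, ← hγ_def, pow_add]
    have step3 : γ ^ (s + j) = (a : ZMod n₁) ↔ γᵤ ^ (s + j) = αᵤ := by
      rw [Units.ext_iff]
      simp [hγᵤ_def, hαᵤ_def]
    have step4 : γᵤ ^ (s + j) = αᵤ ↔ (s + j) ≡ t₀ [MOD m] := by
      rw [← ht₀, pow_eq_pow_iff_modEq, hγᵤord]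
    have hmjj : j ≤ m * j := Nat.le_mul_of_pos_left j hm
    have h3 : t₀ + m * j - j + j = t₀ + m * j := by omega
    have hmod : t₀ + m * j ≡ t₀ [MOD m] := Nat.add_mul_mod_self_left t₀ m j
    have step5 : (s + j) ≡ t₀ [MOD m] ↔ s ≡ t₀ + m * j - j [MOD m] := by
      constructor
      · intro h
        exact Nat.ModEq.add_right_cancel' j (by rw [h3]; exact h.trans hmod.symm)
      · intro h
        have h2 := h.add_right j
        rw [h3] at h2
        exact h2.trans hmod
    rw [step1, step2, step3, step4, step5]
    exact Iff.rfl
  have : ((Finset.range e).filter (fun s => (g ^ s * u ^ j) % n % n₁ = a)) =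
      ((Finset.range (m * k)).filter (fun s => s % m = (t₀ + m * j - j) % m)) := by
    rw [hek]
    exact Finset.filter_congr (fun s _ => by rw [hcond s])
  rw [this, count_range_mod _ _ _ (Nat.mod_lt _ hm)]
end

section
/- For each cyclotomic class W_j (0 ≤ j ≤ d-1) and each t ∈ Q, the sum of β^{it} over i ∈ W_j equals -((n₂-1)/d) mod p in GF(q^m) ⊇ GF(q) of characteristic p. -/
/-- The Whiteman generalized cyclotomic class `W_i = {g^s u^i mod n : 0 ≤ s ≤ e-1}`. -/
def whitemanClass (n e : ℕ) (g u : ZMod n) (i : ℕ) : Finset (ZMod n) :=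
  (Finset.range e).image (fun s => g ^ s * u ^ i)

lemma pow_eq_pow_of_mod_eq' {K : Type*} [Monoid K] (γ : K) (T : ℕ) (hT : γ ^ T = 1)
    {a b : ℕ} (h : a % T = b % T) : γ ^ a = γ ^ b := by
  conv_lhs => rw [← Nat.div_add_mod a T]
  conv_rhs => rw [← Nat.div_add_mod b T]
  rw [pow_add, pow_add, pow_mul, pow_mul, hT, one_pow, h]
  simp

lemma pow_eq_pow_iff_modEq_of_finOrder {M : Type*} [Monoid M] {a : M} (h : IsOfFinOrder a)
    {m n : ℕ} : a ^ m = a ^ n ↔ m ≡ n [MOD orderOf a] := by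
  obtain ⟨u, rfl⟩ := h.isUnit
  rw [orderOf_units]
  constructor
  · intro hh
    have hu : u ^ m = u ^ n := by
      ext
      simpa [Units.val_pow_eq_pow_val] using hh
    exact pow_eq_pow_iff_modEq.mp hu
  · intro hh
    have hu : u ^ m = u ^ n := pow_eq_pow_iff_modEq.mpr hh
    calc (u : M) ^ m = ((u ^ m : Mˣ) : M) := (Units.val_pow_eq_pow_val u m).symm
      _ = ((u ^ n : Mˣ) : M) := by rw [hu]
      _ = (u : M) ^ n := Units.val_pow_eq_pow_val u n

lemma sum_range_mul_of_periodic' {M : Type*} [AddCommMonoid M] (F : ℕ → M) (T c : ℕ)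
    (h : ∀ s, F (s + T) = F s) :
    ∑ s ∈ Finset.range (T * c), F s = c • ∑ s ∈ Finset.range T, F s := by
  have haux : ∀ m x, F (x + T * m) = F x := by
    intro m
    induction m with
    | zero => simp
    | succ m ih =>
      intro x
      have : x + T * (m + 1) = (x + T * m) + T := by ring
      rw [this, h, ih]
  induction c with
  | zero => simp
  | succ c ih =>
    rw [Nat.mul_succ, Finset.sum_range_add, ih, succ_nsmul]
    congr 1
    refine Finset.sum_congr rfl fun x _ => ?_
    rw [Nat.add_comm (T * c) x, haux]

lemma sum_zmod_pow_val' {K : Type*} [CommRing K] (γ : K) (n : ℕ) [NeZero n] :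
    ∑ a : ZMod n, γ ^ a.val = ∑ m ∈ Finset.range n, γ ^ m := by
  rcases Nat.exists_eq_succ_of_ne_zero (NeZero.ne n) with ⟨m, rfl⟩
  exact Fin.sum_univ_eq_sum_range (fun i => γ ^ i) (m + 1)

/-- For each cyclotomic class `W_j` and each `t ∈ Q = {kn₂ : 1 ≤ k ≤ n₁-1}`,
`∑_{i ∈ W_j} β^{it} = -((n₂-1)/d)` in a field of characteristic `p` with `p ∤ n`. -/
theorem sum_whitemanClass_Q {K : Type*} [Field K] (p : ℕ) [CharP K p]
    (n₁ n₂ n d e : ℕ)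
    (hp₁ : n₁.Prime) (hp₂ : n₂.Prime) (ho₁ : Odd n₁) (ho₂ : Odd n₂) (hne : n₁ ≠ n₂)
    (hn : n = n₁ * n₂) (hd : d = Nat.gcd (n₁ - 1) (n₂ - 1))
    (he : e = (n₁ - 1) * (n₂ - 1) / d)
    (g u : ℕ)
    (hg₁ : orderOf (g : ZMod n₁) = n₁ - 1) (hg₂ : orderOf (g : ZMod n₂) = n₂ - 1)
    (hu₁ : u ≡ g [MOD n₁]) (hu₂ : u ≡ 1 [MOD n₂])
    (β : K) (hβ : IsPrimitiveRoot β n) (hpn : ¬ p ∣ n)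
    (j : ℕ) (hj : j < d) (t k : ℕ) (ht : t = k * n₂) (hk₁ : 1 ≤ k) (hk₂ : k ≤ n₁ - 1) :
    ∑ i ∈ whitemanClass n e (g : ZMod n) (u : ZMod n) j, β ^ (i.val * t) =
      -(((n₂ - 1) / d : ℕ) : K) := by
  haveI : Fact n₁.Prime := ⟨hp₁⟩
  haveI : Fact n₂.Prime := ⟨hp₂⟩
  have hn₁2 : 2 ≤ n₁ := hp₁.two_le
  have hn₂2 : 2 ≤ n₂ := hp₂.two_le
  have hn0 : 0 < n := by rw [hn]; positivity
  haveI : NeZero n := ⟨hn0.ne'⟩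
  have hd1 : d ∣ n₂ - 1 := hd ▸ Nat.gcd_dvd_right _ _
  have hd0 : 0 < d := hd ▸ Nat.gcd_pos_of_pos_left _ (by omega)
  set c := (n₂ - 1) / d with hc
  have hec : e = (n₁ - 1) * c := by rw [he, hc, Nat.mul_div_assoc _ hd1]
  -- γ = β^t has γ^n₁ = 1 and γ ≠ 1
  set γ : K := β ^ t with hγdef
  have hβn : β ^ n = 1 := hβ.pow_eq_one
  have hγn₁ : γ ^ n₁ = 1 := by
    rw [hγdef, ← pow_mul, ht, show k * n₂ * n₁ = n * k by rw [hn]; ring, pow_mul, hβn, one_pow]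
  have hγ1 : γ ≠ 1 := by
    intro h
    rw [hγdef, ht] at h
    have hdvd := (hβ.pow_eq_one_iff_dvd (k * n₂)).mp h
    rw [hn] at hdvd
    have h2 : n₁ ∣ k := (Nat.mul_dvd_mul_iff_right (show 0 < n₂ by omega)).mp hdvd
    have := Nat.le_of_dvd (by omega) h2
    omega
  -- g is a unit mod n₁ of finite order
  have hgfin₁ : IsOfFinOrder (g : ZMod n₁) := by
    by_contra hh
    have := orderOf_eq_zero_iff.mpr hh
    omega
  have hgfin₂ : IsOfFinOrder (g : ZMod n₂) := by
    by_contra hh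
    have := orderOf_eq_zero_iff.mpr hh
    omega
  have hg0 : (g : ZMod n₁) ≠ 0 := by
    intro h
    have := pow_orderOf_eq_one (g : ZMod n₁)
    rw [hg₁, h, zero_pow (by omega : n₁ - 1 ≠ 0)] at this
    exact zero_ne_one this
  -- casts
  have hn₁dvd : n₁ ∣ n := hn ▸ dvd_mul_right _ _
  have hn₂dvd : n₂ ∣ n := hn ▸ dvd_mul_left _ _
  set φ₁ := ZMod.castHom hn₁dvd (ZMod n₁) with hφ₁
  set φ₂ := ZMod.castHom hn₂dvd (ZMod n₂) with hφ₂
  have hu₁' : (u : ZMod n₁) = (g : ZMod n₁) := (ZMod.natCast_eq_natCast_iff u g n₁).mpr hu₁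
  have hu₂' : (u : ZMod n₂) = 1 := by
    have := (ZMod.natCast_eq_natCast_iff u 1 n₂).mpr hu₂
    simpa using this
  have hφ₁x : ∀ s : ℕ, φ₁ ((g : ZMod n)^s * (u : ZMod n)^j) = (g : ZMod n₁) ^ (s + j) := by
    intro s
    rw [map_mul, map_pow, map_pow, map_natCast, map_natCast, hu₁', pow_add]
  have hφ₂x : ∀ s : ℕ, φ₂ ((g : ZMod n)^s * (u : ZMod n)^j) = (g : ZMod n₂) ^ s := by
    intro s
    rw [map_mul, map_pow, map_pow, map_natCast, map_natCast, hu₂', one_pow, mul_one]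
  -- injectivity on range e
  have hlcm : e = Nat.lcm (n₁ - 1) (n₂ - 1) := by rw [he, hd]; rfl
  have hinj : ∀ x ∈ Finset.range e, ∀ y ∈ Finset.range e,
      (g : ZMod n)^x * (u : ZMod n)^j = (g : ZMod n)^y * (u : ZMod n)^j → x = y := by
    intro x hx y hy hEq
    rw [Finset.mem_range] at hx hy
    have e₁ : (g : ZMod n₁) ^ (x + j) = (g : ZMod n₁) ^ (y + j) := by
      rw [← hφ₁x, ← hφ₁x, hEq]
    have e₂ : (g : ZMod n₂) ^ x = (g : ZMod n₂) ^ y := by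
      rw [← hφ₂x, ← hφ₂x, hEq]
    have m₁ : x ≡ y [MOD n₁ - 1] := by
      have := (pow_eq_pow_iff_modEq_of_finOrder hgfin₁).mp e₁
      rw [hg₁] at this
      exact Nat.ModEq.add_right_cancel' j this
    have m₂ : x ≡ y [MOD n₂ - 1] := by
      have := (pow_eq_pow_iff_modEq_of_finOrder hgfin₂).mp e₂
      rwa [hg₂] at this
    have d₁ : ((n₁ - 1 : ℕ) : ℤ) ∣ (y : ℤ) - x := (Nat.modEq_iff_dvd).mp m₁
    have d₂ : ((n₂ - 1 : ℕ) : ℤ) ∣ (y : ℤ) - x := (Nat.modEq_iff_dvd).mp m₂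
    have dl : ((e : ℕ) : ℤ) ∣ (y : ℤ) - x := by
      have := Int.ofNat_dvd_left.mpr (Int.lcm_dvd (Int.dvd_natAbs.mpr d₁) (Int.dvd_natAbs.mpr d₂))
      rwa [show Int.lcm ((n₁ - 1 : ℕ) : ℤ) ((n₂ - 1 : ℕ) : ℤ) = Nat.lcm (n₁-1) (n₂-1) by
        simp [Int.lcm], ← hlcm] at this
    have hxy : x ≡ y [MOD e] := (Nat.modEq_iff_dvd).mpr dl
    rwa [Nat.ModEq, Nat.mod_eq_of_lt hx, Nat.mod_eq_of_lt hy] at hxy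
  -- rewrite sum over image as sum over range
  rw [whitemanClass, Finset.sum_image hinj]
  -- each term equals γ ^ (val of cast mod n₁)
  have hterm : ∀ s : ℕ,
      β ^ (((g : ZMod n)^s * (u : ZMod n)^j).val * t) = γ ^ ((g : ZMod n₁) ^ (s + j)).val := by
    intro s
    set x : ZMod n := (g : ZMod n)^s * (u : ZMod n)^j with hx
    have h1 : β ^ (x.val * t) = γ ^ x.val := by
      rw [hγdef, ← pow_mul, mul_comm t x.val]
    rw [h1]
    apply pow_eq_pow_of_mod_eq' γ n₁ hγn₁
    have hval : (φ₁ x).val = x.val % n₁ := by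
      rw [ZMod.castHom_apply, ← ZMod.natCast_val, ZMod.val_natCast]
    rw [← hφ₁x s, hval, Nat.mod_mod_of_dvd _ dvd_rfl]
  rw [Finset.sum_congr rfl (fun s _ => hterm s), hec,
    sum_range_mul_of_periodic' _ _ _ (by
      intro s
      have : s + (n₁ - 1) + j = (s + j) + (n₁ - 1) := by ring
      rw [this, pow_add, ← hg₁, pow_orderOf_eq_one, mul_one])]
  -- inner sum equals -1
  have hinj' : Set.InjOn (fun s => (g : ZMod n₁) ^ (s + j)) (Finset.range (n₁ - 1)) := by
    intro x hx y hy hEq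
    simp only [Finset.coe_range, Set.mem_Iio] at hx hy
    have := (pow_eq_pow_iff_modEq_of_finOrder hgfin₁).mp hEq
    rw [hg₁] at this
    have h2 := Nat.ModEq.add_right_cancel' j this
    rwa [Nat.ModEq, Nat.mod_eq_of_lt hx, Nat.mod_eq_of_lt hy] at h2
  have himg : (Finset.range (n₁ - 1)).image (fun s => (g : ZMod n₁) ^ (s + j)) =
      Finset.univ.erase 0 := by
    apply Finset.eq_of_subset_of_card_le
    · intro a ha
      obtain ⟨s, _, rfl⟩ := Finset.mem_image.mp ha
      exact Finset.mem_erase.mpr ⟨pow_ne_zero _ hg0, Finset.mem_univ _⟩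
    · rw [Finset.card_image_of_injOn hinj', Finset.card_range,
        Finset.card_erase_of_mem (Finset.mem_univ _), Finset.card_univ, ZMod.card]
  have hS : ∑ s ∈ Finset.range (n₁ - 1), γ ^ ((g : ZMod n₁) ^ (s + j)).val = -1 := by
    have hsi := Finset.sum_image (s := Finset.range (n₁ - 1))
      (g := fun s : ℕ => (g : ZMod n₁) ^ (s + j)) (f := fun a : ZMod n₁ => γ ^ a.val)
      (fun x hx y hy h => hinj' (Finset.mem_coe.mpr hx) (Finset.mem_coe.mpr hy) h)
    rw [← hsi, himg, Finset.sum_erase_eq_sub (Finset.mem_univ _),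
      sum_zmod_pow_val' γ n₁, geom_sum_eq hγ1, hγn₁, sub_self, zero_div,
      ZMod.val_zero, pow_zero, zero_sub]
  rw [hS, nsmul_eq_mul, mul_neg_one, hc]
end

section
/- For each cyclotomic class W_j (0 ≤ j ≤ d-1) and each t ∈ P, the sum of β^{it} over i ∈ W_j equals -((n₁-1)/d) mod p. -/
lemma aux_pow_congr {M : Type*} [Monoid M] {ζ : M} {c : ℕ} (hζ : ζ ^ c = 1)
    {a b : ℕ} (h : a ≡ b [MOD c]) : ζ ^ a = ζ ^ b := by
  have h' : a % c = b % c := h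
  calc ζ ^ a = ζ ^ (c * (a / c) + a % c) := by rw [Nat.div_add_mod]
    _ = (ζ ^ c) ^ (a / c) * ζ ^ (a % c) := by rw [pow_add, pow_mul]
    _ = (ζ ^ c) ^ (b / c) * ζ ^ (b % c) := by rw [hζ, h', one_pow, one_pow]
    _ = ζ ^ (c * (b / c) + b % c) := by rw [pow_add, pow_mul]
    _ = ζ ^ b := by rw [Nat.div_add_mod]

lemma aux_sum_periodic {K : Type*} [AddCommMonoid K] (F : ℕ → K) (c : ℕ)
    (hF : ∀ s, F (s + c) = F s) (m : ℕ) :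
    ∑ s ∈ Finset.range (m * c), F s = m • ∑ s ∈ Finset.range c, F s := by
  have hshift : ∀ m x, F (m * c + x) = F x := by
    intro m
    induction m with
    | zero => simp
    | succ q ihq =>
      intro x
      have h1 : (q + 1) * c + x = (q * c + x) + c := by ring
      rw [h1, hF, ihq]
  induction m with
  | zero => simp
  | succ m ih =>
    rw [Nat.succ_mul, Finset.sum_range_add, ih, succ_nsmul]
    congr 1
    exact Finset.sum_congr rfl fun x _ => hshift m x

/-- For each cyclotomic class `W_j` and each `t ∈ P = {kn₁ : 1 ≤ k ≤ n₂-1}`,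
`∑_{i ∈ W_j} β^{it} = -((n₁-1)/d)` in a field of characteristic `p` with `p ∤ n`. -/
theorem sum_whitemanClass_P {K : Type*} [Field K] (p : ℕ) [CharP K p]
    (n₁ n₂ n d e : ℕ)
    (hp₁ : n₁.Prime) (hp₂ : n₂.Prime) (ho₁ : Odd n₁) (ho₂ : Odd n₂) (hne : n₁ ≠ n₂)
    (hn : n = n₁ * n₂) (hd : d = Nat.gcd (n₁ - 1) (n₂ - 1))
    (he : e = (n₁ - 1) * (n₂ - 1) / d)
    (g u : ℕ)
    (hg₁ : orderOf (g : ZMod n₁) = n₁ - 1) (hg₂ : orderOf (g : ZMod n₂) = n₂ - 1)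
    (hu₁ : u ≡ g [MOD n₁]) (hu₂ : u ≡ 1 [MOD n₂])
    (β : K) (hβ : IsPrimitiveRoot β n) (hpn : ¬ p ∣ n)
    (j : ℕ) (hj : j < d) (t k : ℕ) (ht : t = k * n₁) (hk₁ : 1 ≤ k) (hk₂ : k ≤ n₂ - 1) :
    ∑ i ∈ whitemanClass n e (g : ZMod n) (u : ZMod n) j, β ^ (i.val * t) =
      -(((n₁ - 1) / d : ℕ) : K) := by
  subst hn ht
  haveI : Fact n₂.Prime := ⟨hp₂⟩
  have hn₁1 : 1 < n₁ := hp₁.one_lt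
  have hn₂1 : 1 < n₂ := hp₂.one_lt
  have hnpos : 0 < n₁ * n₂ := by positivity
  haveI : NeZero n₁ := ⟨hp₁.pos.ne'⟩
  haveI : NeZero n₂ := ⟨hp₂.pos.ne'⟩
  haveI : NeZero (n₁ * n₂) := ⟨hnpos.ne'⟩
  have hdpos : 0 < d := lt_of_le_of_lt (Nat.zero_le j) hj
  have hcop : Nat.Coprime n₁ n₂ := (Nat.coprime_primes hp₁ hp₂).mpr hne
  have hdd1 : d ∣ n₁ - 1 := hd ▸ Nat.gcd_dvd_left _ _
  -- g, u are units mod n₁, n₂ and mod n₁n₂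
  have hgu₁ : IsUnit (g : ZMod n₁) :=
    IsUnit.of_pow_eq_one (hg₁ ▸ pow_orderOf_eq_one (g : ZMod n₁))
      (by omega)
  have hgu₂ : IsUnit (g : ZMod n₂) :=
    IsUnit.of_pow_eq_one (hg₂ ▸ pow_orderOf_eq_one (g : ZMod n₂))
      (by omega)
  have hgcop₁ : Nat.Coprime g n₁ := (ZMod.isUnit_iff_coprime g n₁).mp hgu₁
  have hgcop₂ : Nat.Coprime g n₂ := (ZMod.isUnit_iff_coprime g n₂).mp hgu₂
  have hucast₁ : (u : ZMod n₁) = (g : ZMod n₁) := (ZMod.natCast_eq_natCast_iff _ _ _).mpr hu₁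
  have hucast₂ : (u : ZMod n₂) = 1 := by
    have := (ZMod.natCast_eq_natCast_iff u 1 n₂).mpr hu₂
    simpa using this
  have hucop₁ : Nat.Coprime u n₁ := (ZMod.isUnit_iff_coprime u n₁).mp (hucast₁ ▸ hgu₁)
  have hucop₂ : Nat.Coprime u n₂ :=
    (ZMod.isUnit_iff_coprime u n₂).mp (hucast₂ ▸ isUnit_one)
  have hgg : IsUnit (g : ZMod (n₁ * n₂)) :=
    (ZMod.isUnit_iff_coprime g (n₁ * n₂)).mpr (Nat.Coprime.mul_right hgcop₁ hgcop₂)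
  have huu : IsUnit (u : ZMod (n₁ * n₂)) :=
    (ZMod.isUnit_iff_coprime u (n₁ * n₂)).mpr (Nat.Coprime.mul_right hucop₁ hucop₂)
  -- order of g mod n₁n₂ is e
  have horder : orderOf (g : ZMod (n₁ * n₂)) = e := by
    have hφ := ZMod.chineseRemainder hcop
    have h1 : orderOf (g : ZMod (n₁ * n₂)) = orderOf (hφ (g : ZMod (n₁ * n₂))) :=
      (orderOf_injective hφ.toMonoidHom hφ.injective _).symm
    have h2 : hφ (g : ZMod (n₁ * n₂)) = ((g : ZMod n₁), (g : ZMod n₂)) := by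
      have := map_natCast (hφ : ZMod (n₁ * n₂) →+* ZMod n₁ × ZMod n₂) g
      simpa [Prod.ext_iff] using this
    rw [h1, h2, Prod.orderOf, hg₁, hg₂, he, hd]
    rfl
  -- injectivity of s ↦ g^s u^j on range e
  have hinj : ∀ x ∈ Finset.range e, ∀ y ∈ Finset.range e,
      (g : ZMod (n₁ * n₂)) ^ x * (u : ZMod (n₁ * n₂)) ^ j =
      (g : ZMod (n₁ * n₂)) ^ y * (u : ZMod (n₁ * n₂)) ^ j → x = y := by
    intro x hx y hy hxy
    rw [Finset.mem_range] at hx hy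
    have h1 : (g : ZMod (n₁ * n₂)) ^ x = (g : ZMod (n₁ * n₂)) ^ y :=
      (huu.pow j).mul_right_cancel hxy
    have h2 : hgg.unit ^ x = hgg.unit ^ y := by
      apply Units.ext
      simpa [hgg.unit_spec] using h1
    have h3 : x ≡ y [MOD orderOf hgg.unit] := pow_eq_pow_iff_modEq.mp h2
    rw [← orderOf_units, hgg.unit_spec, horder] at h3
    exact h3.eq_of_lt_of_lt hx hy
  rw [whitemanClass, Finset.sum_image hinj]
  -- set up roots of unity
  have hγ : IsPrimitiveRoot (β ^ n₁) n₂ := hβ.pow hnpos rfl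
  set γ : K := β ^ n₁ with hγdef
  have hkcop : Nat.Coprime k n₂ := by
    refine ((hp₂.coprime_iff_not_dvd).mpr ?_).symm
    intro hdvd
    have := Nat.le_of_dvd hk₁ hdvd
    omega
  set δ : K := γ ^ k with hδdef
  have hδ : IsPrimitiveRoot δ n₂ := hγ.pow_of_coprime k hkcop
  have hδone : δ ^ n₂ = 1 := hδ.pow_eq_one
  -- rewrite each term
  have hterm : ∀ s : ℕ,
      β ^ (((g : ZMod (n₁ * n₂)) ^ s * (u : ZMod (n₁ * n₂)) ^ j).val * (k * n₁)) =
      δ ^ (g ^ s) := by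
    intro s
    have hcast : (g : ZMod (n₁ * n₂)) ^ s * (u : ZMod (n₁ * n₂)) ^ j =
        ((g ^ s * u ^ j : ℕ) : ZMod (n₁ * n₂)) := by push_cast; ring
    set v := ((g : ZMod (n₁ * n₂)) ^ s * (u : ZMod (n₁ * n₂)) ^ j).val with hvdef
    have hveq : v = (g ^ s * u ^ j) % (n₁ * n₂) := by
      rw [hvdef, hcast, ZMod.val_natCast]
    have hmodN : v ≡ g ^ s * u ^ j [MOD n₁ * n₂] := by
      rw [hveq]; exact Nat.mod_modEq _ _
    have hmod : v ≡ g ^ s [MOD n₂] := by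
      have h1 : v ≡ g ^ s * u ^ j [MOD n₂] := hmodN.of_dvd (dvd_mul_left n₂ n₁)
      have h2 : g ^ s * u ^ j ≡ g ^ s * 1 [MOD n₂] :=
        (Nat.ModEq.refl (g ^ s)).mul (by simpa using hu₂.pow j)
      simpa using h1.trans h2
    have hre : v * (k * n₁) = n₁ * k * v := by ring
    rw [hre, pow_mul, pow_mul, ← hγdef, ← hδdef]
    exact aux_pow_congr hδone hmod
  simp only [hterm]
  -- periodicity
  have hgmod : g ^ (n₂ - 1) ≡ 1 [MOD n₂] := by
    have h1 : (g : ZMod n₂) ^ (n₂ - 1) = 1 := hg₂ ▸ pow_orderOf_eq_one (g : ZMod n₂)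
    have h2 : ((g ^ (n₂ - 1) : ℕ) : ZMod n₂) = ((1 : ℕ) : ZMod n₂) := by push_cast; exact h1
    exact (ZMod.natCast_eq_natCast_iff _ _ _).mp h2
  have hper : ∀ s, δ ^ (g ^ (s + (n₂ - 1))) = δ ^ (g ^ s) := by
    intro s
    apply aux_pow_congr hδone
    calc g ^ (s + (n₂ - 1)) = g ^ s * g ^ (n₂ - 1) := pow_add g s (n₂ - 1)
      _ ≡ g ^ s * 1 [MOD n₂] := (Nat.ModEq.refl _).mul hgmod
      _ = g ^ s := mul_one _
  have hec : e = ((n₁ - 1) / d) * (n₂ - 1) := by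
    obtain ⟨q, hq⟩ := hdd1
    rw [he, hq, Nat.mul_div_cancel_left q hdpos, mul_assoc,
      Nat.mul_div_cancel_left _ hdpos]
  rw [hec, aux_sum_periodic _ _ hper]
  -- the inner sum equals -1
  have hterm₂ : ∀ s : ℕ, δ ^ (g ^ s) = δ ^ (((g : ZMod n₂) ^ s).val) := by
    intro s
    apply aux_pow_congr hδone
    have : ((g : ZMod n₂) ^ s).val = (g ^ s) % n₂ := by
      rw [show (g : ZMod n₂) ^ s = ((g ^ s : ℕ) : ZMod n₂) by push_cast; ring,
        ZMod.val_natCast]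
    rw [this]
    exact (Nat.mod_modEq _ _).symm
  have hinj₂ : ∀ x ∈ Finset.range (n₂ - 1), ∀ y ∈ Finset.range (n₂ - 1),
      (g : ZMod n₂) ^ x = (g : ZMod n₂) ^ y → x = y := by
    intro x hx y hy hxy
    rw [Finset.mem_range] at hx hy
    have h2 : hgu₂.unit ^ x = hgu₂.unit ^ y := by
      apply Units.ext
      simpa [hgu₂.unit_spec] using hxy
    have h3 : x ≡ y [MOD orderOf hgu₂.unit] := pow_eq_pow_iff_modEq.mp h2
    rw [← orderOf_units, hgu₂.unit_spec, hg₂] at h3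
    exact h3.eq_of_lt_of_lt hx hy
  have himg : (Finset.range (n₂ - 1)).image (fun s => (g : ZMod n₂) ^ s) =
      Finset.univ.erase (0 : ZMod n₂) := by
    apply Finset.eq_of_subset_of_card_le
    · intro a ha
      simp only [Finset.mem_image, Finset.mem_range] at ha
      obtain ⟨s, _, rfl⟩ := ha
      exact Finset.mem_erase.mpr ⟨(hgu₂.pow s).ne_zero, Finset.mem_univ _⟩
    · rw [Finset.card_erase_of_mem (Finset.mem_univ _), Finset.card_univ, ZMod.card,
        Finset.card_image_of_injOn (fun x hx y hy => hinj₂ x hx y hy), Finset.card_range]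
  have huniv : (Finset.univ : Finset (ZMod n₂)) =
      (Finset.range n₂).image (fun x : ℕ => (x : ZMod n₂)) := by
    ext a
    simp only [Finset.mem_univ, true_iff, Finset.mem_image, Finset.mem_range]
    exact ⟨a.val, a.val_lt, ZMod.natCast_zmod_val a⟩
  have hinjc : ∀ x ∈ Finset.range n₂, ∀ y ∈ Finset.range n₂,
      (x : ZMod n₂) = (y : ZMod n₂) → x = y := by
    intro x hx y hy hxy
    rw [Finset.mem_range] at hx hy
    rwa [ZMod.natCast_eq_natCast_iff, Nat.ModEq, Nat.mod_eq_of_lt hx,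
      Nat.mod_eq_of_lt hy] at hxy
  have htotal : ∑ a : ZMod n₂, δ ^ a.val = 0 := by
    have h1 : ∑ a ∈ (Finset.range n₂).image (fun x : ℕ => (x : ZMod n₂)), δ ^ a.val
        = ∑ x ∈ Finset.range n₂, δ ^ ((x : ZMod n₂)).val := Finset.sum_image hinjc
    rw [huniv, h1]
    have h2 : ∀ x ∈ Finset.range n₂, δ ^ ((x : ZMod n₂)).val = δ ^ x := by
      intro x hx
      rw [ZMod.val_natCast_of_lt (Finset.mem_range.mp hx)]
    rw [Finset.sum_congr rfl h2]
    exact hδ.geom_sum_eq_zero hn₂1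
  have hS : ∑ s ∈ Finset.range (n₂ - 1), δ ^ (g ^ s) = -1 := by
    have hstep : ∑ s ∈ Finset.range (n₂ - 1), δ ^ (g ^ s)
        = ∑ a ∈ (Finset.range (n₂ - 1)).image (fun s => (g : ZMod n₂) ^ s), δ ^ a.val := by
      rw [Finset.sum_image hinj₂]
      exact Finset.sum_congr rfl fun s _ => hterm₂ s
    rw [hstep, himg]
    have herase := Finset.sum_erase_add Finset.univ (fun a : ZMod n₂ => δ ^ a.val)
      (Finset.mem_univ (0 : ZMod n₂))
    simp only [ZMod.val_zero, pow_zero, htotal] at herase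
    exact eq_neg_of_add_eq_zero_left herase
  rw [hS, nsmul_eq_mul, mul_neg_one]
end

section
/- Let d = 6 divide both n₁-1 and n₂-1 with gcd(n₁-1,n₂-1) = 6, and η = (n₁-1)(n₂-1)/36. Then -1 (mod n) lies in W_0 if η is odd, and -1 lies in W_3 if η is even. -/
lemma pow_eq_neg_one_of_modEq {p : ℕ} (hp : p.Prime) (hp2 : p ≠ 2)
    {g : ℕ} (hg : orderOf (g : ZMod p) = p - 1) {m : ℕ}
    (hm : m ≡ (p - 1) / 2 [MOD p - 1]) : (g : ZMod p) ^ m = -1 := by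
  haveI : Fact p.Prime := ⟨hp⟩
  have hp3 : 3 ≤ p := by have := hp.two_le; omega
  have heven : 2 ∣ p - 1 := by
    obtain ⟨k, hk⟩ := hp.odd_of_ne_two hp2; omega
  have h1 : (g : ZMod p) ^ m = (g : ZMod p) ^ ((p - 1) / 2) := by
    rw [← pow_mod_orderOf, hg, hm, ← hg, pow_mod_orderOf]
  rw [h1]
  have hx2 : (g : ZMod p) ^ ((p - 1) / 2) * (g : ZMod p) ^ ((p - 1) / 2) = 1 := by
    rw [← pow_add, show (p - 1) / 2 + (p - 1) / 2 = p - 1 by omega, ← hg,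
      pow_orderOf_eq_one]
  rcases mul_self_eq_one_iff.mp hx2 with h | h
  · exfalso
    have hdvd : orderOf (g : ZMod p) ∣ (p - 1) / 2 := orderOf_dvd_of_pow_eq_one h
    rw [hg] at hdvd
    have := Nat.le_of_dvd (by omega) hdvd
    omega
  · exact h

/-- With `gcd(n₁-1,n₂-1) = 6` and `η = (n₁-1)(n₂-1)/36`: `-1 ∈ W₀` if `η` is odd, and
`-1 ∈ W₃` if `η` is even. -/
theorem neg_one_mem_whitemanClass (n₁ n₂ n e η : ℕ)
    (hp₁ : n₁.Prime) (hp₂ : n₂.Prime) (ho₁ : Odd n₁) (ho₂ : Odd n₂) (hne : n₁ ≠ n₂)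
    (hn : n = n₁ * n₂) (hd : Nat.gcd (n₁ - 1) (n₂ - 1) = 6)
    (he : e = (n₁ - 1) * (n₂ - 1) / 6) (hη : η = (n₁ - 1) * (n₂ - 1) / 36)
    (g u : ℕ)
    (hg₁ : orderOf (g : ZMod n₁) = n₁ - 1) (hg₂ : orderOf (g : ZMod n₂) = n₂ - 1)
    (hu₁ : u ≡ g [MOD n₁]) (hu₂ : u ≡ 1 [MOD n₂]) :
    (Odd η → (-1 : ZMod n) ∈ whitemanClass n e (g : ZMod n) (u : ZMod n) 0) ∧
    (Even η → (-1 : ZMod n) ∈ whitemanClass n e (g : ZMod n) (u : ZMod n) 3) := by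
  have hn₁2 : n₁ ≠ 2 := by obtain ⟨k, hk⟩ := ho₁; omega
  have hn₂2 : n₂ ≠ 2 := by obtain ⟨k, hk⟩ := ho₂; omega
  obtain ⟨a', ha'⟩ : 6 ∣ n₁ - 1 := hd ▸ Nat.gcd_dvd_left _ _
  obtain ⟨b', hb'⟩ : 6 ∣ n₂ - 1 := hd ▸ Nat.gcd_dvd_right _ _
  have h2₁ := hp₁.two_le
  have h2₂ := hp₂.two_le
  have ha'pos : 1 ≤ a' := by omega
  have hb'pos : 1 ≤ b' := by omega
  have hcop : Nat.Coprime n₁ n₂ := (Nat.coprime_primes hp₁ hp₂).mpr hne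
  have hcop' : Nat.gcd a' b' = 1 := by
    have h6 : 6 * Nat.gcd a' b' = 6 := by
      rw [← Nat.gcd_mul_left, ← ha', ← hb', hd]
    omega
  have he' : e = 6 * (a' * b') := by
    rw [he, ha', hb', show 6 * a' * (6 * b') = 6 * (a' * b') * 6 by ring,
      Nat.mul_div_cancel _ (by norm_num)]
  have hη' : η = a' * b' := by
    rw [hη, ha', hb', show 6 * a' * (6 * b') = a' * b' * 36 by ring,
      Nat.mul_div_cancel _ (by norm_num)]
  have hηpos : 1 ≤ a' * b' := Nat.mul_pos ha'pos hb'pos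
  have h1n : 1 ≤ n := by rw [hn]; exact Nat.mul_pos (by omega) (by omega)
  have hhalf₁ : (n₁ - 1) / 2 = 3 * a' := by omega
  have hhalf₂ : (n₂ - 1) / 2 = 3 * b' := by omega
  -- the key computation
  have key : ∀ s i : ℕ, (s + i) ≡ (n₁ - 1) / 2 [MOD n₁ - 1] →
      s ≡ (n₂ - 1) / 2 [MOD n₂ - 1] →
      (g : ZMod n) ^ s * (u : ZMod n) ^ i = -1 := by
    intro s i hs₁ hs₂
    have hcast : ((g ^ s * u ^ i : ℕ) : ZMod n) = ((n - 1 : ℕ) : ZMod n) := by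
      rw [ZMod.natCast_eq_natCast_iff, hn]
      refine (Nat.modEq_and_modEq_iff_modEq_mul hcop).mp ⟨?_, ?_⟩
      · rw [← ZMod.natCast_eq_natCast_iff]
        push_cast
        have hu : (u : ZMod n₁) = (g : ZMod n₁) :=
          (ZMod.natCast_eq_natCast_iff _ _ _).mpr hu₁
        rw [hu, ← pow_add, pow_eq_neg_one_of_modEq hp₁ hn₁2 hg₁ hs₁,
          Nat.cast_sub (show 1 ≤ n₁ * n₂ from Nat.mul_pos (by omega) (by omega))]
        push_cast
        simp
      · rw [← ZMod.natCast_eq_natCast_iff]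
        push_cast
        have hu : (u : ZMod n₂) = 1 := by
          have := (ZMod.natCast_eq_natCast_iff u 1 n₂).mpr hu₂
          simpa using this
        rw [hu, one_pow, mul_one, pow_eq_neg_one_of_modEq hp₂ hn₂2 hg₂ hs₂,
          Nat.cast_sub (show 1 ≤ n₁ * n₂ from Nat.mul_pos (by omega) (by omega))]
        push_cast
        simp
    have hneg : ((n - 1 : ℕ) : ZMod n) = -1 := by
      rw [Nat.cast_sub h1n, ZMod.natCast_self]; ring
    rw [hneg] at hcast
    push_cast at hcast
    exact hcast
  constructor
  · -- η odd, class W₀, s = 3 * (a' * b')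
    intro hodd
    rw [hη'] at hodd
    have hoa : Odd a' := (Nat.odd_mul.mp hodd).1
    have hob : Odd b' := (Nat.odd_mul.mp hodd).2
    refine Finset.mem_image.mpr ⟨3 * (a' * b'), Finset.mem_range.mpr (by omega), ?_⟩
    refine key _ 0 ?_ ?_
    · rw [hhalf₁, ha', Nat.add_zero]
      obtain ⟨c, hc⟩ := hob
      have heq : 3 * (a' * b') = 3 * a' + 6 * a' * c := by rw [hc]; ring
      rw [heq]
      show (3 * a' + 6 * a' * c) % (6 * a') = (3 * a') % (6 * a')
      exact Nat.add_mul_mod_self_left (3 * a') (6 * a') c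
    · rw [hhalf₂, hb']
      obtain ⟨c, hc⟩ := hoa
      have heq : 3 * (a' * b') = 3 * b' + 6 * b' * c := by rw [hc]; ring
      rw [heq]
      show (3 * b' + 6 * b' * c) % (6 * b') = (3 * b') % (6 * b')
      exact Nat.add_mul_mod_self_left (3 * b') (6 * b') c
  · -- η even, class W₃
    intro heven
    rw [hη'] at heven
    have hpar : a' % 2 + b' % 2 = 1 := by
      have h1 : a' % 2 = 0 ∨ b' % 2 = 0 := by
        rcases Nat.even_mul.mp heven with h | h
        · obtain ⟨t, ht⟩ := h; left; omega
        · obtain ⟨t, ht⟩ := h; right; omega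
      have h2 : ¬(a' % 2 = 0 ∧ b' % 2 = 0) := by
        rintro ⟨x, y⟩
        have := Nat.dvd_gcd (Nat.dvd_of_mod_eq_zero x) (Nat.dvd_of_mod_eq_zero y)
        rw [hcop'] at this
        omega
      omega
    set α := (n₁ - 1) / 2 + (n₁ - 1) - 3 with hα
    have hcompat : α ≡ (n₂ - 1) / 2 [MOD Nat.gcd (n₁ - 1) (n₂ - 1)] := by
      rw [hd]
      show (α % 6 = ((n₂ - 1) / 2) % 6)
      rw [hα, hhalf₁, hhalf₂, ha']
      omega
    obtain ⟨K, hK₁, hK₂⟩ := Nat.chineseRemainder' hcompat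
    have hepos : 0 < e := by omega
    have hae : (n₁ - 1) ∣ e := ⟨b', by rw [he', ha']; ring⟩
    have hbe : (n₂ - 1) ∣ e := ⟨a', by rw [he', hb']; ring⟩
    refine Finset.mem_image.mpr ⟨K % e, Finset.mem_range.mpr (Nat.mod_lt _ hepos), ?_⟩
    refine key _ 3 ?_ ?_
    · have h1 : K % e ≡ α [MOD n₁ - 1] :=
        ((Nat.mod_modEq K e).of_dvd hae).trans hK₁
      have h2 : K % e + 3 ≡ α + 3 [MOD n₁ - 1] := h1.add_right 3
      refine h2.trans ?_
      have hα3 : α + 3 = (n₁ - 1) / 2 + (n₁ - 1) := by rw [hα]; omega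
      rw [hα3]
      show ((n₁ - 1) / 2 + (n₁ - 1)) % (n₁ - 1) = ((n₁ - 1) / 2) % (n₁ - 1)
      exact Nat.add_mod_right _ _
    · exact ((Nat.mod_modEq K e).of_dvd hbe).trans hK₂
end

section
/- If q ∉ W₀, then S(β) ∉ {0, -1}. More precisely, if q ∈ W₁ then S satisfies S(β)^{q³} + S(β) + 1 = 0, and neither 0 nor -1 is a root of z^{q³} + z + 1. -/
lemma pow_eq_pow_mod_of_pow_eq_one {M : Type*} [Monoid M] (x : M) {e : ℕ}
    (hx : x ^ e = 1) (a : ℕ) : x ^ a = x ^ (a % e) := by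
  conv_lhs => rw [← Nat.div_add_mod a e]
  rw [pow_add, pow_mul, hx, one_pow, one_mul]

lemma whitemanClass_image_mul {n e : ℕ} (he : 0 < e) (g u : ZMod n) (hge : g ^ e = 1)
    (s₀ i j : ℕ) :
    (whitemanClass n e g u i).image (fun x => x * (g ^ s₀ * u ^ j)) =
      whitemanClass n e g u (i + j) := by
  unfold whitemanClass
  rw [Finset.image_image]
  ext x
  simp only [Finset.mem_image, Finset.mem_range, Function.comp_apply]
  constructor
  · rintro ⟨s, hs, rfl⟩
    refine ⟨(s + s₀) % e, Nat.mod_lt _ he, ?_⟩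
    rw [← pow_eq_pow_mod_of_pow_eq_one g hge (s + s₀), pow_add, pow_add]
    ring
  · rintro ⟨s, hs, rfl⟩
    refine ⟨(s + (e - s₀ % e)) % e, Nat.mod_lt _ he, ?_⟩
    have h1 : s₀ % e < e := Nat.mod_lt _ he
    have h2 : e * (s₀ / e) + s₀ % e = s₀ := Nat.div_add_mod s₀ e
    have key : g ^ ((s + (e - s₀ % e)) % e) * g ^ s₀ = g ^ s := by
      rw [← pow_eq_pow_mod_of_pow_eq_one g hge (s + (e - s₀ % e)), ← pow_add]
      have h3 : s + (e - s₀ % e) + s₀ = s + e * (s₀ / e) + e := by omega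
      rw [h3, pow_add, pow_add, pow_mul, hge, one_pow, mul_one, mul_one]
    calc g ^ ((s + (e - s₀ % e)) % e) * u ^ i * (g ^ s₀ * u ^ j)
        = (g ^ ((s + (e - s₀ % e)) % e) * g ^ s₀) * (u ^ i * u ^ j) := by ring
      _ = g ^ s * u ^ (i + j) := by rw [key, pow_add]

lemma whitemanClass_add_six {n e : ℕ} (he : 0 < e) (g u : ZMod n) (hge : g ^ e = 1)
    {t : ℕ} (hu6 : u ^ 6 = g ^ t) (i : ℕ) :
    whitemanClass n e g u (i + 6) = whitemanClass n e g u i := by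
  have h1 : whitemanClass n e g u (i + 6) =
      (whitemanClass n e g u i).image (fun x => x * (g ^ t * u ^ 0)) := by
    unfold whitemanClass
    rw [Finset.image_image]
    apply Finset.image_congr
    intro s _
    simp only [Function.comp_apply, pow_zero, mul_one, pow_add, ← hu6]
    ring
  rw [h1, whitemanClass_image_mul he g u hge t i 0, Nat.add_zero]

lemma exists_pow_eq_of_orderOf {n' : ℕ} (hp : n'.Prime) {g : ZMod n'}
    (hg : orderOf g = n' - 1) {x : ZMod n'} (hx : IsUnit x) : ∃ a : ℕ, g ^ a = x := by
  haveI : Fact n'.Prime := ⟨hp⟩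
  have h2 : 2 ≤ n' := hp.two_le
  have hg1 : g ^ (n' - 1) = 1 := by rw [← hg]; exact pow_orderOf_eq_one g
  have hgu : IsUnit g := by
    apply IsUnit.of_mul_eq_one (g ^ (n' - 2))
    rw [← pow_succ']
    have : n' - 2 + 1 = n' - 1 := by omega
    rw [this, hg1]
  have hgo : orderOf hgu.unit = n' - 1 := by
    rw [← orderOf_units, IsUnit.unit_spec, hg]
  have htop : Subgroup.zpowers hgu.unit = ⊤ := by
    apply Subgroup.eq_top_of_card_eq
    rw [Nat.card_zpowers, hgo, Nat.card_eq_fintype_card, ZMod.card_units_eq_totient,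
      Nat.totient_prime hp]
  have hmem : hx.unit ∈ Submonoid.powers hgu.unit := by
    rw [mem_powers_iff_mem_zpowers, htop]
    exact Subgroup.mem_top _
  obtain ⟨a, ha⟩ := hmem
  refine ⟨a, ?_⟩
  have := congrArg Units.val ha
  simpa using this

lemma sum_Icc_primitive {K : Type*} [Field K] {m : ℕ} (hm : 1 < m) {γ : K}
    (hγ : IsPrimitiveRoot γ m) : ∑ k ∈ Finset.Icc 1 (m - 1), γ ^ k = -1 := by
  have h0 : Finset.range m = insert 0 (Finset.Icc 1 (m - 1)) := by
    ext k
    simp only [Finset.mem_range, Finset.mem_insert, Finset.mem_Icc]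
    omega
  have hsum := hγ.geom_sum_eq_zero hm
  rw [h0, Finset.sum_insert (by simp)] at hsum
  simp only [pow_zero] at hsum
  linear_combination hsum

lemma sum_P_eq_neg_one {K : Type*} [Field K] {n d m : ℕ} (h0 : 0 < n) (hn : n = d * m)
    (hm : 1 < m) {β : K} (hβ : IsPrimitiveRoot β n) :
    ∑ k ∈ Finset.Icc 1 (m - 1), β ^ (k * d) = -1 := by
  have hdelta : IsPrimitiveRoot (β ^ d) m := hβ.pow h0 hn
  rw [← sum_Icc_primitive hm hdelta]
  exact Finset.sum_congr rfl fun k _ => by rw [← pow_mul, mul_comm]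

/-- The value at `x` of the polynomial `∑_{i ∈ P ∪ W_a ∪ W_b ∪ W_c} x^i`, where
`P = {kn₁ : 1 ≤ k ≤ n₂-1}`.  With `(a,b,c) = (3,4,5)` this is `S(x)`, with `(1,2,3)`
it is `T(x)`, and with `(2,3,4)` it is `U(x)`. -/
def STUval {K : Type*} [Field K] (n₁ n₂ n e : ℕ) (g u : ZMod n) (a b c : ℕ) (x : K) : K :=
  (∑ k ∈ Finset.Icc 1 (n₂ - 1), x ^ (k * n₁)) +
    (∑ i ∈ whitemanClass n e g u a, x ^ i.val) +
    (∑ i ∈ whitemanClass n e g u b, x ^ i.val) +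
    (∑ i ∈ whitemanClass n e g u c, x ^ i.val)

/-- If `q ∈ W₁` (so `q ∉ W₀`), then `S(β)` satisfies `S(β)^{q³} + S(β) + 1 = 0`, neither
`0` nor `-1` is a root of `z^{q³} + z + 1`, and hence `S(β) ∉ {0, -1}`. -/
theorem Sval_ne_zero_neg_one {K : Type*} [Field K] (p : ℕ) [CharP K p]
    (q n₁ n₂ n e : ℕ) (hq : ∃ m : ℕ, 0 < m ∧ q = p ^ m)
    (hp₁ : n₁.Prime) (hp₂ : n₂.Prime) (ho₁ : Odd n₁) (ho₂ : Odd n₂) (hne : n₁ ≠ n₂)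
    (hn : n = n₁ * n₂) (hd : Nat.gcd (n₁ - 1) (n₂ - 1) = 6)
    (he : e = (n₁ - 1) * (n₂ - 1) / 6)
    (g u : ℕ)
    (hg₁ : orderOf (g : ZMod n₁) = n₁ - 1) (hg₂ : orderOf (g : ZMod n₂) = n₂ - 1)
    (hu₁ : u ≡ g [MOD n₁]) (hu₂ : u ≡ 1 [MOD n₂])
    (β : K) (hβ : IsPrimitiveRoot β n) (hcop : Nat.Coprime n q)
    (hqW : (q : ZMod n) ∈ whitemanClass n e (g : ZMod n) (u : ZMod n) 1) :
    (STUval n₁ n₂ n e (g : ZMod n) (u : ZMod n) 3 4 5 β) ^ (q ^ 3) +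
        STUval n₁ n₂ n e (g : ZMod n) (u : ZMod n) 3 4 5 β + 1 = 0 ∧
      (0 : K) ^ (q ^ 3) + 0 + 1 ≠ 0 ∧
      (-1 : K) ^ (q ^ 3) + (-1) + 1 ≠ 0 ∧
      STUval n₁ n₂ n e (g : ZMod n) (u : ZMod n) 3 4 5 β ≠ 0 ∧
      STUval n₁ n₂ n e (g : ZMod n) (u : ZMod n) 3 4 5 β ≠ -1 := by
  -- ### numerology
  have h6₁ : 6 ∣ n₁ - 1 := hd ▸ Nat.gcd_dvd_left _ _
  have h6₂ : 6 ∣ n₂ - 1 := hd ▸ Nat.gcd_dvd_right _ _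
  have hn₁7 : 7 ≤ n₁ := by have := hp₁.two_le; omega
  have hn₂7 : 7 ≤ n₂ := by have := hp₂.two_le; omega
  obtain ⟨k₁, hk₁⟩ := h6₁
  obtain ⟨k₂, hk₂⟩ := h6₂
  have hek : e = (n₁ - 1) * k₂ := by
    rw [he, hk₂, show (n₁ - 1) * (6 * k₂) = 6 * ((n₁ - 1) * k₂) by ring,
      Nat.mul_div_cancel_left _ (by norm_num)]
  have hek' : e = k₁ * (n₂ - 1) := by
    rw [he, hk₁, show 6 * k₁ * (n₂ - 1) = 6 * (k₁ * (n₂ - 1)) by ring,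
      Nat.mul_div_cancel_left _ (by norm_num)]
  have hde₁ : (n₁ - 1) ∣ e := ⟨k₂, hek⟩
  have hde₂ : (n₂ - 1) ∣ e := ⟨k₁, by rw [hek']; ring⟩
  have he0 : 0 < e := by
    rw [hek]; have : 1 ≤ k₂ := by omega
    exact Nat.mul_pos (by omega) this
  have hn1 : 1 < n := by
    have : 7 * 7 ≤ n₁ * n₂ := Nat.mul_le_mul hn₁7 hn₂7
    omega
  have hn0 : n ≠ 0 := by omega
  haveI : NeZero n := ⟨hn0⟩
  haveI : Fact (1 < n) := ⟨hn1⟩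
  haveI F₁ : Fact n₁.Prime := ⟨hp₁⟩
  haveI F₂ : Fact n₂.Prime := ⟨hp₂⟩
  have hcop₁₂ : n₁.Coprime n₂ := (Nat.coprime_primes hp₁ hp₂).mpr hne
  -- ### CRT helpers
  have hcrt : ∀ a b : ℕ, a ≡ b [MOD n₁] → a ≡ b [MOD n₂] → ((a : ZMod n) = b) := by
    intro a b h1 h2
    rw [ZMod.natCast_eq_natCast_iff, hn]
    exact (Nat.modEq_and_modEq_iff_modEq_mul hcop₁₂).mp ⟨h1, h2⟩
  have hsplit₁ : ∀ a b : ℕ, (a : ZMod n) = b → a ≡ b [MOD n₁] := fun a b h =>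
    Nat.ModEq.of_dvd ⟨n₂, hn⟩ ((ZMod.natCast_eq_natCast_iff _ _ _).mp h)
  have hsplit₂ : ∀ a b : ℕ, (a : ZMod n) = b → a ≡ b [MOD n₂] := fun a b h =>
    Nat.ModEq.of_dvd ⟨n₁, by rw [hn, mul_comm]⟩ ((ZMod.natCast_eq_natCast_iff _ _ _).mp h)
  have hcast_u₁ : (u : ZMod n₁) = (g : ZMod n₁) := (ZMod.natCast_eq_natCast_iff _ _ _).mpr hu₁
  have hcast_u₂ : (u : ZMod n₂) = 1 := by
    have := (ZMod.natCast_eq_natCast_iff u 1 n₂).mpr hu₂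
    simpa using this
  have hgo₁ : (g : ZMod n₁) ^ (n₁ - 1) = 1 := by rw [← hg₁]; exact pow_orderOf_eq_one _
  have hgo₂ : (g : ZMod n₂) ^ (n₂ - 1) = 1 := by rw [← hg₂]; exact pow_orderOf_eq_one _
  have hpow₁ : ∀ a b : ℕ, a ≡ b [MOD n₁ - 1] → (g : ZMod n₁) ^ a = (g : ZMod n₁) ^ b := by
    intro a b h
    rw [pow_eq_pow_mod_of_pow_eq_one _ hgo₁ a, pow_eq_pow_mod_of_pow_eq_one _ hgo₁ b]
    exact congrArg (fun c => (g : ZMod n₁) ^ c) h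
  have hpow₂ : ∀ a b : ℕ, a ≡ b [MOD n₂ - 1] → (g : ZMod n₂) ^ a = (g : ZMod n₂) ^ b := by
    intro a b h
    rw [pow_eq_pow_mod_of_pow_eq_one _ hgo₂ a, pow_eq_pow_mod_of_pow_eq_one _ hgo₂ b]
    exact congrArg (fun c => (g : ZMod n₂) ^ c) h
  have hcg₁ : Nat.Coprime n₁ g := by
    rw [hp₁.coprime_iff_not_dvd]
    intro hdvd
    have h0 : (g : ZMod n₁) = 0 := (ZMod.natCast_eq_zero_iff _ _).mpr hdvd
    have hgo₁' := hgo₁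
    rw [h0, zero_pow (by omega)] at hgo₁'
    exact zero_ne_one hgo₁'
  have hcg₂ : Nat.Coprime n₂ g := by
    rw [hp₂.coprime_iff_not_dvd]
    intro hdvd
    have h0 : (g : ZMod n₂) = 0 := (ZMod.natCast_eq_zero_iff _ _).mpr hdvd
    have hgo₂' := hgo₂
    rw [h0, zero_pow (by omega)] at hgo₂'
    exact zero_ne_one hgo₂'
  have hgu₁ : IsUnit (g : ZMod n₁) := (ZMod.isUnit_iff_coprime g n₁).mpr hcg₁.symm
  have hgu₂ : IsUnit (g : ZMod n₂) := (ZMod.isUnit_iff_coprime g n₂).mpr hcg₂.symm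
  have hpoweq₁ : ∀ a b : ℕ, (g : ZMod n₁) ^ a = (g : ZMod n₁) ^ b → a ≡ b [MOD n₁ - 1] := by
    intro a b h
    have hu' : hgu₁.unit ^ a = hgu₁.unit ^ b := by
      ext
      simpa [IsUnit.unit_spec] using h
    have hmod := pow_eq_pow_iff_modEq.mp hu'
    have hord : orderOf hgu₁.unit = n₁ - 1 := by
      rw [← orderOf_units, IsUnit.unit_spec, hg₁]
    rwa [hord] at hmod
  have hpoweq₂ : ∀ a b : ℕ, (g : ZMod n₂) ^ a = (g : ZMod n₂) ^ b → a ≡ b [MOD n₂ - 1] := by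
    intro a b h
    have hu' : hgu₂.unit ^ a = hgu₂.unit ^ b := by
      ext
      simpa [IsUnit.unit_spec] using h
    have hmod := pow_eq_pow_iff_modEq.mp hu'
    have hord : orderOf hgu₂.unit = n₂ - 1 := by
      rw [← orderOf_units, IsUnit.unit_spec, hg₂]
    rwa [hord] at hmod
  -- ### g^e = 1 in ZMod n
  have hge : (g : ZMod n) ^ e = 1 := by
    have h1 : (g : ZMod n₁) ^ e = 1 := by
      have := hpow₁ e 0 (Nat.modEq_zero_iff_dvd.mpr hde₁)
      simpa using this
    have h2 : (g : ZMod n₂) ^ e = 1 := by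
      have := hpow₂ e 0 (Nat.modEq_zero_iff_dvd.mpr hde₂)
      simpa using this
    have hm1 : g ^ e ≡ 1 [MOD n₁] := by
      rw [← ZMod.natCast_eq_natCast_iff]
      push_cast
      simpa using h1
    have hm2 : g ^ e ≡ 1 [MOD n₂] := by
      rw [← ZMod.natCast_eq_natCast_iff]
      push_cast
      simpa using h2
    have := hcrt _ _ hm1 hm2
    push_cast at this
    simpa using this
  -- ### u^6 = g^t
  obtain ⟨t, ht₁, ht₂⟩ := Nat.chineseRemainder' (m := n₂ - 1) (n := n₁ - 1) (a := 6) (b := 0)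
    (by rw [hd]; decide)
  have hu6 : (u : ZMod n) ^ 6 = (g : ZMod n) ^ t := by
    have hm1 : u ^ 6 ≡ g ^ t [MOD n₁] := by
      rw [← ZMod.natCast_eq_natCast_iff]
      push_cast
      rw [hcast_u₁, hpow₁ t 6 ht₁]
    have hm2 : u ^ 6 ≡ g ^ t [MOD n₂] := by
      rw [← ZMod.natCast_eq_natCast_iff]
      push_cast
      rw [hcast_u₂, hpow₂ t 0 ht₂]
      simp
    have := hcrt _ _ hm1 hm2
    push_cast at this
    exact this
  -- ### basic power facts for β
  have hbpow : ∀ a : ℕ, β ^ a = β ^ ((a : ZMod n)).val := by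
    intro a
    rw [ZMod.val_natCast]
    exact pow_eq_pow_mod_of_pow_eq_one β hβ.pow_eq_one a
  have hvalcast : ∀ x : ZMod n, ((x.val : ℕ) : ZMod n) = x := fun x => by
    rw [ZMod.natCast_val, ZMod.cast_id]
  have hvmul : ∀ (j : ZMod n) (c : ℕ), (β ^ j.val) ^ c = β ^ ((j * (c : ZMod n)).val) := by
    intro j c
    have h1 : ((j.val * c : ℕ) : ZMod n) = j * (c : ZMod n) := by
      rw [Nat.cast_mul, hvalcast]
    rw [← pow_mul, hbpow (j.val * c), h1]
  -- ### q representation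
  have hqun : IsUnit ((q : ZMod n)) := (ZMod.isUnit_iff_coprime q n).mpr hcop.symm
  obtain ⟨s₀, hs₀e, hqrep⟩ := Finset.mem_image.mp hqW
  have hq3 : ((q ^ 3 : ℕ) : ZMod n) = (g : ZMod n) ^ (s₀ * 3) * (u : ZMod n) ^ 3 := by
    push_cast
    rw [← hqrep]
    ring
  have hq3un : IsUnit (((q ^ 3 : ℕ) : ZMod n)) := by
    push_cast
    exact hqun.pow 3
  -- ### the class-shift identity for sums
  have hshift : ∀ i : ℕ,
      ∑ j ∈ whitemanClass n e (g : ZMod n) (u : ZMod n) i, (β ^ j.val) ^ (q ^ 3) =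
        ∑ j ∈ whitemanClass n e (g : ZMod n) (u : ZMod n) (i + 3), β ^ j.val := by
    intro i
    have hstep1 : ∑ j ∈ whitemanClass n e (g : ZMod n) (u : ZMod n) i, (β ^ j.val) ^ (q ^ 3)
        = ∑ j ∈ whitemanClass n e (g : ZMod n) (u : ZMod n) i,
            β ^ ((j * ((q ^ 3 : ℕ) : ZMod n)).val) :=
      Finset.sum_congr rfl fun j _ => hvmul j (q ^ 3)
    have hinj : ∀ x ∈ whitemanClass n e (g : ZMod n) (u : ZMod n) i,
        ∀ y ∈ whitemanClass n e (g : ZMod n) (u : ZMod n) i,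
        x * ((q ^ 3 : ℕ) : ZMod n) = y * ((q ^ 3 : ℕ) : ZMod n) → x = y := by
      intro x _ y _ h
      exact hq3un.mul_right_cancel h
    have hstep2 := Finset.sum_image (f := fun x : ZMod n => β ^ x.val)
      (g := fun x : ZMod n => x * ((q ^ 3 : ℕ) : ZMod n)) hinj
    have himg : (whitemanClass n e (g : ZMod n) (u : ZMod n) i).image
        (fun x : ZMod n => x * ((q ^ 3 : ℕ) : ZMod n)) =
        whitemanClass n e (g : ZMod n) (u : ZMod n) (i + 3) := by
      rw [show (fun x : ZMod n => x * ((q ^ 3 : ℕ) : ZMod n)) =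
        (fun x : ZMod n => x * ((g : ZMod n) ^ (s₀ * 3) * (u : ZMod n) ^ 3)) by
          funext x; rw [hq3]]
      exact whitemanClass_image_mul he0 _ _ hge (s₀ * 3) i 3
    rw [hstep1, ← hstep2, himg]
  -- ### class reductions mod 6
  have hW6 : whitemanClass n e (g : ZMod n) (u : ZMod n) 6 =
      whitemanClass n e (g : ZMod n) (u : ZMod n) 0 := by
    have := whitemanClass_add_six he0 (g : ZMod n) (u : ZMod n) hge hu6 0
    simpa using this
  have hW7 : whitemanClass n e (g : ZMod n) (u : ZMod n) 7 =
      whitemanClass n e (g : ZMod n) (u : ZMod n) 1 := by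
    have := whitemanClass_add_six he0 (g : ZMod n) (u : ZMod n) hge hu6 1
    simpa using this
  have hW8 : whitemanClass n e (g : ZMod n) (u : ZMod n) 8 =
      whitemanClass n e (g : ZMod n) (u : ZMod n) 2 := by
    have := whitemanClass_add_six he0 (g : ZMod n) (u : ZMod n) hge hu6 2
    simpa using this
  -- ### P sums
  have hPsum1 : ∑ k ∈ Finset.Icc 1 (n₂ - 1), β ^ (k * n₁) = -1 :=
    sum_P_eq_neg_one (by omega) hn (by omega) hβ
  have hPq3 : ∑ k ∈ Finset.Icc 1 (n₂ - 1), (β ^ (k * n₁)) ^ (q ^ 3) = -1 := by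
    have hβq : IsPrimitiveRoot (β ^ (q ^ 3)) n :=
      hβ.pow_of_coprime _ (Nat.Coprime.pow_left 3 hcop.symm)
    have := sum_P_eq_neg_one (by omega) hn (by omega) hβq
    rw [← this]
    apply Finset.sum_congr rfl
    intro k _
    rw [← pow_mul, ← pow_mul]
    congr 1
    ring
  -- ### coprimality of g, u to n₁, n₂
  have hcu₁ : Nat.Coprime n₁ u := by
    unfold Nat.Coprime
    rw [Nat.gcd_rec n₁ u, show u % n₁ = g % n₁ from hu₁, ← Nat.gcd_rec n₁ g]
    exact hcg₁
  have hcu₂ : Nat.Coprime n₂ u := by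
    unfold Nat.Coprime
    rw [Nat.gcd_rec n₂ u, show u % n₂ = 1 % n₂ from hu₂, ← Nat.gcd_rec n₂ 1]
    exact Nat.gcd_one_right n₂
  -- ### every class member is a unit
  have hWunit : ∀ i : ℕ, ∀ x ∈ whitemanClass n e (g : ZMod n) (u : ZMod n) i, IsUnit x := by
    intro i x hx
    obtain ⟨s, _, rfl⟩ := Finset.mem_image.mp hx
    have hcast : ((g ^ s * u ^ i : ℕ) : ZMod n) = (g : ZMod n) ^ s * (u : ZMod n) ^ i := by
      push_cast; ring
    rw [← hcast, ZMod.isUnit_iff_coprime, hn]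
    exact Nat.Coprime.mul_right
      (Nat.Coprime.mul (Nat.Coprime.pow_left s hcg₁.symm) (Nat.Coprime.pow_left i hcu₁.symm))
      (Nat.Coprime.mul (Nat.Coprime.pow_left s hcg₂.symm) (Nat.Coprime.pow_left i hcu₂.symm))
  -- ### coverage : every unit is in some class W_i, i < 6
  have hcover : ∀ x : ZMod n, IsUnit x →
      ∃ i, i < 6 ∧ x ∈ whitemanClass n e (g : ZMod n) (u : ZMod n) i := by
    intro x hx
    have hxcop : Nat.Coprime x.val n := by
      rw [← ZMod.isUnit_iff_coprime, hvalcast]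
      exact hx
    have hx₁ : IsUnit ((x.val : ℕ) : ZMod n₁) := by
      rw [ZMod.isUnit_iff_coprime]
      exact Nat.Coprime.coprime_dvd_right ⟨n₂, hn⟩ hxcop
    have hx₂ : IsUnit ((x.val : ℕ) : ZMod n₂) := by
      rw [ZMod.isUnit_iff_coprime]
      exact Nat.Coprime.coprime_dvd_right ⟨n₁, by rw [hn, mul_comm]⟩ hxcop
    obtain ⟨a, ha⟩ := exists_pow_eq_of_orderOf hp₁ hg₁ hx₁
    obtain ⟨b, hb⟩ := exists_pow_eq_of_orderOf hp₂ hg₂ hx₂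
    set i := (a + 5 * b) % 6 with hi_def
    have hi6 : i < 6 := Nat.mod_lt _ (by norm_num)
    have hA6 : a + (n₁ - 1) - i ≡ b [MOD 6] := by
      rw [Nat.modEq_iff_dvd]
      have h3 : (6 : ℤ) ∣ ((n₁ - 1 : ℕ) : ℤ) := Int.natCast_dvd_natCast.mpr ⟨k₁, hk₁⟩
      omega
    obtain ⟨s, hsA, hsb⟩ := Nat.chineseRemainder' (m := n₂ - 1) (n := n₁ - 1)
      (a := a + (n₁ - 1) - i) (b := b) (by rw [hd]; exact hA6)
    refine ⟨i, hi6, ?_⟩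
    have hmem : (g : ZMod n) ^ (s % e) * (u : ZMod n) ^ i ∈
        whitemanClass n e (g : ZMod n) (u : ZMod n) i :=
      Finset.mem_image.mpr ⟨s % e, Finset.mem_range.mpr (Nat.mod_lt _ he0), rfl⟩
    suffices hxe : x = (g : ZMod n) ^ (s % e) * (u : ZMod n) ^ i by rw [hxe]; exact hmem
    have hse₁ : s % e ≡ s [MOD n₁ - 1] := Nat.ModEq.of_dvd hde₁ (Nat.mod_modEq s e)
    have hse₂ : s % e ≡ s [MOD n₂ - 1] := Nat.ModEq.of_dvd hde₂ (Nat.mod_modEq s e)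
    have hm₁ : x.val ≡ g ^ (s % e) * u ^ i [MOD n₁] := by
      rw [← ZMod.natCast_eq_natCast_iff]
      push_cast
      rw [hcast_u₁, ← pow_add, ← ha]
      apply hpow₁
      calc a ≡ a + (n₁ - 1) [MOD n₁ - 1] := by
              have : a + (n₁ - 1) ≡ a + 0 [MOD n₁ - 1] :=
                Nat.ModEq.add_left a (Nat.modEq_zero_iff_dvd.mpr dvd_rfl)
              simpa using this.symm
        _ = (a + (n₁ - 1) - i) + i := by omega
        _ ≡ s + i [MOD n₁ - 1] := (hsA.add_right i).symm
        _ ≡ s % e + i [MOD n₁ - 1] := (hse₁.add_right i).symm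
    have hm₂ : x.val ≡ g ^ (s % e) * u ^ i [MOD n₂] := by
      rw [← ZMod.natCast_eq_natCast_iff]
      push_cast
      rw [hcast_u₂, one_pow, mul_one, ← hb]
      apply hpow₂
      exact (hse₂.trans hsb).symm
    have := hcrt _ _ hm₁ hm₂
    rw [hvalcast] at this
    rw [this]
    push_cast
    ring
  -- ### disjointness
  have hdisj : ∀ i ∈ Finset.range 6, ∀ j ∈ Finset.range 6, i ≠ j →
      Disjoint (whitemanClass n e (g : ZMod n) (u : ZMod n) i)
        (whitemanClass n e (g : ZMod n) (u : ZMod n) j) := by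
    intro i hi j hj hij
    rw [Finset.disjoint_left]
    intro x hxi hxj
    obtain ⟨s, hs, rfl⟩ := Finset.mem_image.mp hxi
    obtain ⟨s', hs', heq⟩ := Finset.mem_image.mp hxj
    have hnat : ((g ^ s' * u ^ j : ℕ) : ZMod n) = ((g ^ s * u ^ i : ℕ) : ZMod n) := by
      push_cast
      exact heq
    have hmod₁ := hsplit₁ _ _ hnat
    have hmod₂ := hsplit₂ _ _ hnat
    have hz₁ : (g : ZMod n₁) ^ (s' + j) = (g : ZMod n₁) ^ (s + i) := by
      have := (ZMod.natCast_eq_natCast_iff _ _ n₁).mpr hmod₁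
      push_cast at this
      rw [hcast_u₁] at this
      rw [pow_add, pow_add]
      exact this
    have hz₂ : (g : ZMod n₂) ^ s' = (g : ZMod n₂) ^ s := by
      have := (ZMod.natCast_eq_natCast_iff _ _ n₂).mpr hmod₂
      push_cast at this
      simp only [hcast_u₂, one_pow, mul_one] at this
      exact this
    have hm1 : s' + j ≡ s + i [MOD n₁ - 1] := hpoweq₁ _ _ hz₁
    have hm2 : s' ≡ s [MOD n₂ - 1] := hpoweq₂ _ _ hz₂
    have d1 : (6 : ℤ) ∣ ((s : ℤ) + i) - ((s' : ℤ) + j) := by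
      have hdvd := (Nat.modEq_iff_dvd (n := n₁ - 1)).mp hm1
      have h6 : (6 : ℤ) ∣ ((n₁ - 1 : ℕ) : ℤ) := Int.natCast_dvd_natCast.mpr ⟨k₁, hk₁⟩
      have h7 := dvd_trans h6 hdvd
      omega
    have d2 : (6 : ℤ) ∣ (s : ℤ) - (s' : ℤ) := by
      have hdvd := (Nat.modEq_iff_dvd (n := n₂ - 1)).mp hm2
      have h6 : (6 : ℤ) ∣ ((n₂ - 1 : ℕ) : ℤ) := Int.natCast_dvd_natCast.mpr ⟨k₂, hk₂⟩
      have h7 := dvd_trans h6 hdvd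
      omega
    have hi6 : i < 6 := Finset.mem_range.mp hi
    have hj6 : j < 6 := Finset.mem_range.mp hj
    omega
  -- ### total sum over ZMod n
  have htotal : ∑ x : ZMod n, β ^ x.val = 0 := by
    have himg : (Finset.range n).image (fun i : ℕ => (i : ZMod n)) = Finset.univ := by
      apply Finset.eq_univ_of_forall
      intro x
      exact Finset.mem_image.mpr ⟨x.val, Finset.mem_range.mpr (ZMod.val_lt x), hvalcast x⟩
    have hinj : ∀ x ∈ Finset.range n, ∀ y ∈ Finset.range n,
        (x : ZMod n) = (y : ZMod n) → x = y := by
      intro x hx y hy h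
      have := congrArg ZMod.val h
      rwa [ZMod.val_cast_of_lt (Finset.mem_range.mp hx),
        ZMod.val_cast_of_lt (Finset.mem_range.mp hy)] at this
    calc ∑ x : ZMod n, β ^ x.val
        = ∑ x ∈ (Finset.range n).image (fun i : ℕ => (i : ZMod n)), β ^ x.val := by
          rw [himg]
      _ = ∑ i ∈ Finset.range n, β ^ ((i : ZMod n)).val := Finset.sum_image hinj
      _ = ∑ i ∈ Finset.range n, β ^ i := Finset.sum_congr rfl fun i hi => by
            rw [ZMod.val_cast_of_lt (Finset.mem_range.mp hi)]
      _ = 0 := hβ.geom_sum_eq_zero hn1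
  -- ### the two "multiples" finsets
  have hD₁inj : ∀ x ∈ Finset.Icc 1 (n₂ - 1), ∀ y ∈ Finset.Icc 1 (n₂ - 1),
      ((x * n₁ : ℕ) : ZMod n) = ((y * n₁ : ℕ) : ZMod n) → x = y := by
    intro x hx y hy h
    have hmod : x * n₁ ≡ y * n₁ [MOD n₂ * n₁] := by
      have := (ZMod.natCast_eq_natCast_iff _ _ _).mp h
      rwa [hn, mul_comm n₁ n₂] at this
    have := Nat.ModEq.mul_right_cancel' (by omega) hmod
    simp only [Finset.mem_Icc] at hx hy
    have hxm := this
    unfold Nat.ModEq at hxm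
    rw [Nat.mod_eq_of_lt (by omega), Nat.mod_eq_of_lt (by omega)] at hxm
    exact hxm
  have hD₂inj : ∀ x ∈ Finset.Icc 1 (n₁ - 1), ∀ y ∈ Finset.Icc 1 (n₁ - 1),
      ((x * n₂ : ℕ) : ZMod n) = ((y * n₂ : ℕ) : ZMod n) → x = y := by
    intro x hx y hy h
    have hmod : x * n₂ ≡ y * n₂ [MOD n₁ * n₂] := by
      have := (ZMod.natCast_eq_natCast_iff _ _ _).mp h
      rwa [hn] at this
    have := Nat.ModEq.mul_right_cancel' (by omega) hmod
    simp only [Finset.mem_Icc] at hx hy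
    have hxm := this
    unfold Nat.ModEq at hxm
    rw [Nat.mod_eq_of_lt (by omega), Nat.mod_eq_of_lt (by omega)] at hxm
    exact hxm
  have hD₁sum : ∑ x ∈ (Finset.Icc 1 (n₂ - 1)).image (fun k : ℕ => ((k * n₁ : ℕ) : ZMod n)),
      β ^ x.val = -1 := by
    rw [Finset.sum_image hD₁inj, ← hPsum1]
    exact Finset.sum_congr rfl fun k _ => (hbpow (k * n₁)).symm
  have hPsum2 : ∑ k ∈ Finset.Icc 1 (n₁ - 1), β ^ (k * n₂) = -1 :=
    sum_P_eq_neg_one (by omega) (by rw [hn, mul_comm]) (by omega) hβ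
  have hD₂sum : ∑ x ∈ (Finset.Icc 1 (n₁ - 1)).image (fun k : ℕ => ((k * n₂ : ℕ) : ZMod n)),
      β ^ x.val = -1 := by
    rw [Finset.sum_image hD₂inj, ← hPsum2]
    exact Finset.sum_congr rfl fun k _ => (hbpow (k * n₂)).symm
  -- ### nonunits decomposition
  have hNU : Finset.univ.filter (fun x : ZMod n => ¬ IsUnit x) =
      insert (0 : ZMod n)
        (((Finset.Icc 1 (n₂ - 1)).image (fun k : ℕ => ((k * n₁ : ℕ) : ZMod n))) ∪
          ((Finset.Icc 1 (n₁ - 1)).image (fun k : ℕ => ((k * n₂ : ℕ) : ZMod n)))) := by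
    ext x
    simp only [Finset.mem_filter, Finset.mem_univ, true_and, Finset.mem_insert,
      Finset.mem_union, Finset.mem_image, Finset.mem_Icc]
    constructor
    · intro hx
      by_cases hx0 : x = 0
      · exact Or.inl hx0
      refine Or.inr ?_
      have hxcop : ¬ Nat.Coprime x.val n := by
        rw [← ZMod.isUnit_iff_coprime, hvalcast]
        exact hx
      have hvlt : x.val < n := ZMod.val_lt x
      have hvne : x.val ≠ 0 := by
        intro h
        apply hx0
        have hvx := hvalcast x
        rw [h] at hvx
        simpa using hvx.symm
      have hnand : ¬ (Nat.Coprime x.val n₁ ∧ Nat.Coprime x.val n₂) := by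
        rintro ⟨ha', hb'⟩
        have hcm : Nat.Coprime x.val (n₁ * n₂) := Nat.Coprime.mul_right ha' hb'
        rw [← hn] at hcm
        exact hxcop hcm
      rcases not_and_or.mp hnand with h | h
      · left
        have hdvd : n₁ ∣ x.val := by
          by_contra hnd
          exact h (Nat.coprime_comm.mp (hp₁.coprime_iff_not_dvd.mpr hnd))
        obtain ⟨k, hk⟩ := hdvd
        have hklt : k < n₂ := by
          have : n₁ * k < n₁ * n₂ := by rw [← hk, ← hn]; exact hvlt
          exact lt_of_mul_lt_mul_left this (by omega)
        have hk0 : k ≠ 0 := by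
          rintro rfl
          simp only [mul_zero] at hk
          exact hvne hk
        refine ⟨k, ⟨by omega, by omega⟩, ?_⟩
        rw [← hvalcast x, hk, mul_comm]
      · right
        have hdvd : n₂ ∣ x.val := by
          by_contra hnd
          exact h (Nat.coprime_comm.mp (hp₂.coprime_iff_not_dvd.mpr hnd))
        obtain ⟨k, hk⟩ := hdvd
        have hklt : k < n₁ := by
          have : n₂ * k < n₂ * n₁ := by rw [← hk, mul_comm n₂ n₁, ← hn]; exact hvlt
          exact lt_of_mul_lt_mul_left this (by omega)
        have hk0 : k ≠ 0 := by
          rintro rfl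
          simp only [mul_zero] at hk
          exact hvne hk
        refine ⟨k, ⟨by omega, by omega⟩, ?_⟩
        rw [← hvalcast x, hk, mul_comm]
    · intro h
      rcases h with rfl | ⟨k, ⟨hk1, hk2⟩, rfl⟩ | ⟨k, ⟨hk1, hk2⟩, rfl⟩
      · exact not_isUnit_zero
      · intro hu'
        rw [ZMod.isUnit_iff_coprime] at hu'
        have hc : Nat.Coprime n₁ n := Nat.Coprime.coprime_dvd_left (dvd_mul_left _ _) hu'
        have := hc.eq_one_of_dvd ⟨n₂, hn⟩
        omega
      · intro hu'
        rw [ZMod.isUnit_iff_coprime] at hu'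
        have hc : Nat.Coprime n₂ n := Nat.Coprime.coprime_dvd_left (dvd_mul_left _ _) hu'
        have := hc.eq_one_of_dvd ⟨n₁, by rw [hn, mul_comm]⟩
        omega
  have hD12disj : Disjoint
      ((Finset.Icc 1 (n₂ - 1)).image (fun k : ℕ => ((k * n₁ : ℕ) : ZMod n)))
      ((Finset.Icc 1 (n₁ - 1)).image (fun k : ℕ => ((k * n₂ : ℕ) : ZMod n))) := by
    rw [Finset.disjoint_left]
    rintro x hx1 hx2
    obtain ⟨k, hk, rfl⟩ := Finset.mem_image.mp hx1
    obtain ⟨l, hl, heq⟩ := Finset.mem_image.mp hx2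
    simp only [Finset.mem_Icc] at hk hl
    have hmod := hsplit₁ _ _ heq
    have h0 : l * n₂ ≡ 0 [MOD n₁] := by
      have hk0 : k * n₁ ≡ 0 [MOD n₁] := Nat.modEq_zero_iff_dvd.mpr (dvd_mul_left _ _)
      exact hmod.trans hk0
    have hdvd : n₁ ∣ l * n₂ := Nat.modEq_zero_iff_dvd.mp h0
    have hdl : n₁ ∣ l := (Nat.Coprime.dvd_of_dvd_mul_right hcop₁₂) hdvd
    have := Nat.le_of_dvd (by omega) hdl
    omega
  have h0notin : (0 : ZMod n) ∉
      (((Finset.Icc 1 (n₂ - 1)).image (fun k : ℕ => ((k * n₁ : ℕ) : ZMod n))) ∪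
        ((Finset.Icc 1 (n₁ - 1)).image (fun k : ℕ => ((k * n₂ : ℕ) : ZMod n)))) := by
    rw [Finset.mem_union]
    rintro (h | h)
    · obtain ⟨k, hk, heq⟩ := Finset.mem_image.mp h
      simp only [Finset.mem_Icc] at hk
      have : n ∣ k * n₁ := (ZMod.natCast_eq_zero_iff _ _).mp heq
      have hlt : k * n₁ < n := by
        have h1 : k * n₁ ≤ (n₂ - 1) * n₁ := Nat.mul_le_mul hk.2 (le_refl n₁)
        have h2 : (n₂ - 1) * n₁ = n₂ * n₁ - 1 * n₁ := Nat.sub_mul n₂ 1 n₁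
        have h3 : n₂ * n₁ = n₁ * n₂ := Nat.mul_comm _ _
        have h4 : 1 * 1 ≤ n₂ * n₁ := Nat.mul_le_mul (by omega) (by omega)
        rw [hn]
        omega
      have := Nat.le_of_dvd (Nat.mul_pos (by omega) (by omega)) this
      omega
    · obtain ⟨k, hk, heq⟩ := Finset.mem_image.mp h
      simp only [Finset.mem_Icc] at hk
      have : n ∣ k * n₂ := (ZMod.natCast_eq_zero_iff _ _).mp heq
      have hlt : k * n₂ < n := by
        have h1 : k * n₂ ≤ (n₁ - 1) * n₂ := Nat.mul_le_mul hk.2 (le_refl n₂)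
        have h2 : (n₁ - 1) * n₂ = n₁ * n₂ - 1 * n₂ := Nat.sub_mul n₁ 1 n₂
        have h4 : 1 * 1 ≤ n₁ * n₂ := Nat.mul_le_mul (by omega) (by omega)
        rw [hn]
        omega
      have := Nat.le_of_dvd (Nat.mul_pos (by omega) (by omega)) this
      omega
  -- ### sum over units
  have hUsum : ∑ x ∈ Finset.univ.filter (fun x : ZMod n => IsUnit x), β ^ x.val = 1 := by
    have hsplit := Finset.sum_filter_add_sum_filter_not Finset.univ
      (fun x : ZMod n => IsUnit x) (fun x => β ^ x.val)
    rw [htotal] at hsplit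
    have hnon : ∑ x ∈ Finset.univ.filter (fun x : ZMod n => ¬ IsUnit x), β ^ x.val = -1 := by
      rw [hNU, Finset.sum_insert h0notin, Finset.sum_union hD12disj, hD₁sum, hD₂sum]
      have : ((0 : ZMod n)).val = 0 := ZMod.val_zero
      rw [this]
      ring
    rw [hnon] at hsplit
    linear_combination hsplit
  -- ### union of classes = units
  have hUnion : (Finset.range 6).biUnion
      (fun i => whitemanClass n e (g : ZMod n) (u : ZMod n) i) =
      Finset.univ.filter (fun x : ZMod n => IsUnit x) := by
    ext x
    simp only [Finset.mem_biUnion, Finset.mem_filter, Finset.mem_univ, true_and,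
      Finset.mem_range]
    constructor
    · rintro ⟨i, hi, hx⟩
      exact hWunit i x hx
    · intro hx
      obtain ⟨i, hi, hx'⟩ := hcover x hx
      exact ⟨i, hi, hx'⟩
  have hPD : (↑(Finset.range 6) : Set ℕ).PairwiseDisjoint
      (fun i => whitemanClass n e (g : ZMod n) (u : ZMod n) i) := by
    intro i hi j hj hij
    exact hdisj i (by simpa using hi) j (by simpa using hj) hij
  have hAsum : ∑ i ∈ Finset.range 6,
      ∑ j ∈ whitemanClass n e (g : ZMod n) (u : ZMod n) i, β ^ j.val = 1 := by
    rw [← Finset.sum_biUnion hPD, hUnion, hUsum]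
  -- expand the range-6 sum
  simp only [Finset.sum_range_succ, Finset.sum_range_zero, zero_add] at hAsum
  -- ### characteristic / Frobenius
  have hpp : p.Prime := by
    rcases CharP.char_is_prime_or_zero K p with h | h
    · exact h
    · exfalso
      obtain ⟨m, hm0, hmq⟩ := hq
      rw [h, zero_pow (by omega)] at hmq
      rw [hmq] at hcop
      have := Nat.coprime_zero_right n |>.mp hcop
      omega
  haveI : Fact p.Prime := ⟨hpp⟩
  haveI : ExpChar K p := ExpChar.prime hpp
  obtain ⟨m, hm0, hqpm⟩ := hq
  have hq0 : q ≠ 0 := by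
    rw [hqpm]
    exact pow_ne_zero _ hpp.pos.ne'
  have hq30 : q ^ 3 ≠ 0 := pow_ne_zero _ hq0
  have hF : ∀ x : K, (iterateFrobenius K p (m * 3)) x = x ^ (q ^ 3) := by
    intro x
    rw [iterateFrobenius_def, hqpm, ← pow_mul]
  -- ### the main equation
  have hSval : STUval n₁ n₂ n e (g : ZMod n) (u : ZMod n) 3 4 5 β =
      -1 + ((∑ j ∈ whitemanClass n e (g : ZMod n) (u : ZMod n) 3, β ^ j.val) +
        (∑ j ∈ whitemanClass n e (g : ZMod n) (u : ZMod n) 4, β ^ j.val) +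
        (∑ j ∈ whitemanClass n e (g : ZMod n) (u : ZMod n) 5, β ^ j.val)) := by
    unfold STUval
    rw [hPsum1]
    ring
  have hs3 := hshift 3
  have hs4 := hshift 4
  have hs5 := hshift 5
  norm_num at hs3 hs4 hs5
  rw [hW6] at hs3
  rw [hW7] at hs4
  rw [hW8] at hs5
  have hSq : (STUval n₁ n₂ n e (g : ZMod n) (u : ZMod n) 3 4 5 β) ^ (q ^ 3) =
      -1 + ((∑ j ∈ whitemanClass n e (g : ZMod n) (u : ZMod n) 0, β ^ j.val) +
        (∑ j ∈ whitemanClass n e (g : ZMod n) (u : ZMod n) 1, β ^ j.val) +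
        (∑ j ∈ whitemanClass n e (g : ZMod n) (u : ZMod n) 2, β ^ j.val)) := by
    rw [← hF]
    unfold STUval
    rw [map_add, map_add, map_add, map_sum, map_sum, map_sum, map_sum]
    simp only [hF]
    rw [hPq3, hs3, hs4, hs5]
    ring
  have hmain : (STUval n₁ n₂ n e (g : ZMod n) (u : ZMod n) 3 4 5 β) ^ (q ^ 3) +
      STUval n₁ n₂ n e (g : ZMod n) (u : ZMod n) 3 4 5 β + 1 = 0 := by
    rw [hSq, hSval]
    linear_combination hAsum
  have hz : (0 : K) ^ (q ^ 3) + 0 + 1 ≠ 0 := by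
    rw [zero_pow hq30]
    simp
  have hneg : (-1 : K) ^ (q ^ 3) + (-1) + 1 ≠ 0 := by
    have h1 : (-1 : K) ^ (q ^ 3) + (-1) + 1 = (-1 : K) ^ (q ^ 3) := by ring
    rw [h1]
    exact pow_ne_zero _ (by norm_num)
  refine ⟨hmain, hz, hneg, ?_, ?_⟩
  · intro h
    rw [h] at hmain
    exact hz hmain
  · intro h
    rw [h] at hmain
    exact hneg hmain
end

section
/- The cyclic code of length n = n₁n₂ over GF(q) with generator polynomial g(x) = (x^n-1)(x-1)/((x^{n₁}-1)(x^{n₂}-1)) has dimension n₁ + n₂ - 1 and minimum distance min(n₁, n₂). -/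
open Polynomial Finset


private lemma coeff_comb {F : Type*} [Field F] {m k : ℕ} (hm : 0 < m) (p : F[X])
    (hp : ∀ t, m ≤ t → p.coeff t = 0) {i : ℕ} (hi : i < m * k) :
    ((∑ j ∈ Finset.range k, (X : F[X]) ^ (m * j)) * p).coeff i = p.coeff (i % m) := by
  have hmd := Nat.mod_add_div i m
  have hmod := Nat.mod_lt i hm
  rw [Finset.sum_mul, Polynomial.finset_sum_coeff]
  have hj0 : i / m ∈ Finset.range k := Finset.mem_range.mpr (Nat.div_lt_of_lt_mul hi)
  rw [Finset.sum_eq_single_of_mem (i / m) hj0]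
  · rw [coeff_X_pow_mul', if_pos (Nat.mul_div_le i m)]
    congr 1
    omega
  · intro j _ hne
    rw [coeff_X_pow_mul']
    split_ifs with hle
    · apply hp
      rcases (Ne.lt_or_gt hne) with h | h
      · have h1 : m * (j + 1) ≤ m * (i / m) := Nat.mul_le_mul_left m h
        have h2 : m * (i / m) ≤ i := Nat.mul_div_le i m
        have : m * j + m ≤ i := by nlinarith
        omega
      · exfalso
        have h1 : m * (i / m + 1) ≤ m * j := Nat.mul_le_mul_left m h
        have : m * (i / m) + m ≤ m * j := by nlinarith
        omega
    · rfl

private lemma decomp {F : Type*} [Field F] {n₁ n₂ n : ℕ} (h₁ : 0 < n₁) (h₂ : 0 < n₂)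
    (hn : n = n₁ * n₂)
    (hcp : IsCoprime (∑ i ∈ Finset.range n₁, (X : F[X]) ^ i)
      (∑ i ∈ Finset.range n₂, (X : F[X]) ^ i))
    (g : F[X]) (hg : g * ((X ^ n₁ - 1) * (X ^ n₂ - 1)) = (X ^ n - 1) * (X - 1))
    (c : F[X]) (hdvd : g ∣ c) (hdeg : c.natDegree < n) :
    ∃ v u : F[X], ∀ i, i < n → c.coeff i = v.coeff (i % n₁) + u.coeff (i % n₂) := by
  have hn0 : 0 < n := hn ▸ Nat.mul_pos h₁ h₂
  set e₁ : F[X] := ∑ i ∈ Finset.range n₁, X ^ i with he₁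
  set e₂ : F[X] := ∑ i ∈ Finset.range n₂, X ^ i with he₂
  set π₁ : F[X] := ∑ j ∈ Finset.range n₂, X ^ (n₁ * j) with hπ₁def
  set π₂ : F[X] := ∑ j ∈ Finset.range n₁, X ^ (n₂ * j) with hπ₂def
  have ne₁ : (X ^ n₁ - 1 : F[X]) ≠ 0 := by
    have := X_pow_sub_C_ne_zero h₁ (1 : F); rwa [C_1] at this
  have ne₂ : (X ^ n₂ - 1 : F[X]) ≠ 0 := by
    have := X_pow_sub_C_ne_zero h₂ (1 : F); rwa [C_1] at this
  have nen : (X ^ n - 1 : F[X]) ≠ 0 := by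
    have := X_pow_sub_C_ne_zero hn0 (1 : F); rwa [C_1] at this
  have neX : (X - 1 : F[X]) ≠ 0 := by
    have := X_sub_C_ne_zero (1 : F); rwa [C_1] at this
  have hgeo₁ : e₁ * (X - 1) = X ^ n₁ - 1 := geom_sum_mul X n₁
  have hgeo₂ : e₂ * (X - 1) = X ^ n₂ - 1 := geom_sum_mul X n₂
  have hπ₁ : π₁ * (X ^ n₁ - 1) = X ^ n - 1 := by
    have := geom_sum_mul ((X : F[X]) ^ n₁) n₂
    simp_rw [← pow_mul] at this
    rw [hπ₁def]
    rw [this, hn]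
  have hπ₂ : π₂ * (X ^ n₂ - 1) = X ^ n - 1 := by
    have := geom_sum_mul ((X : F[X]) ^ n₂) n₁
    simp_rw [← pow_mul] at this
    rw [hπ₂def, this, hn, mul_comm n₁ n₂]
  have hge₁ : g * e₁ = π₂ := by
    apply mul_right_cancel₀ (mul_ne_zero neX ne₂)
    linear_combination (X ^ n₂ - 1) * g * hgeo₁ + hg - (X - 1) * hπ₂
  have hge₂ : g * e₂ = π₁ := by
    apply mul_right_cancel₀ (mul_ne_zero neX ne₁)
    linear_combination (X ^ n₁ - 1) * g * hgeo₂ + hg - (X - 1) * hπ₁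
  obtain ⟨a, b, hab⟩ := hcp
  obtain ⟨k, hk⟩ := hdvd
  have m₁ : Monic (X ^ n₁ - 1 : F[X]) := by
    have := monic_X_pow_sub_C (1 : F) h₁.ne'; rwa [C_1] at this
  have m₂ : Monic (X ^ n₂ - 1 : F[X]) := by
    have := monic_X_pow_sub_C (1 : F) h₂.ne'; rwa [C_1] at this
  set w₁ : F[X] := (b * k) %ₘ (X ^ n₁ - 1) with hw₁
  set q₁ : F[X] := (b * k) /ₘ (X ^ n₁ - 1) with hq₁
  set w₂ : F[X] := (a * k) %ₘ (X ^ n₂ - 1) with hw₂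
  set q₂ : F[X] := (a * k) /ₘ (X ^ n₂ - 1) with hq₂
  have r₁ : w₁ + (X ^ n₁ - 1) * q₁ = b * k := modByMonic_add_div _ _
  have r₂ : w₂ + (X ^ n₂ - 1) * q₂ = a * k := modByMonic_add_div _ _
  have hdeg₁ : ((X : F[X]) ^ n₁ - 1).degree = (n₁ : WithBot ℕ) := by
    rw [← C_1, degree_X_pow_sub_C h₁]
  have hdeg₂ : ((X : F[X]) ^ n₂ - 1).degree = (n₂ : WithBot ℕ) := by
    rw [← C_1, degree_X_pow_sub_C h₂]
  have hdw₁ : w₁.degree < (n₁ : WithBot ℕ) := by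
    have := degree_modByMonic_lt (b * k) m₁
    rw [hdeg₁] at this
    rwa [← hw₁] at this
  have hdw₂ : w₂.degree < (n₂ : WithBot ℕ) := by
    have := degree_modByMonic_lt (a * k) m₂
    rw [hdeg₂] at this
    rwa [← hw₂] at this
  have hvan₁ : ∀ t, n₁ ≤ t → w₁.coeff t = 0 := fun t ht =>
    coeff_eq_zero_of_degree_lt (lt_of_lt_of_le hdw₁ (by exact_mod_cast ht))
  have hvan₂ : ∀ t, n₂ ≤ t → w₂.coeff t = 0 := fun t ht =>
    coeff_eq_zero_of_degree_lt (lt_of_lt_of_le hdw₂ (by exact_mod_cast ht))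
  have hndw₁ : w₁.natDegree ≤ n₁ - 1 := by
    by_cases h0 : w₁ = 0
    · simp [h0]
    · have := (natDegree_lt_iff_degree_lt h0).mpr hdw₁
      omega
  have hndw₂ : w₂.natDegree ≤ n₂ - 1 := by
    by_cases h0 : w₂ = 0
    · simp [h0]
    · have := (natDegree_lt_iff_degree_lt h0).mpr hdw₂
      omega
  have hndπ₁ : π₁.natDegree ≤ n₁ * (n₂ - 1) := by
    rw [hπ₁def]
    apply natDegree_sum_le_of_forall_le
    intro j hj
    rw [natDegree_X_pow]
    have := Finset.mem_range.mp hj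
    exact Nat.mul_le_mul_left n₁ (by omega)
  have hndπ₂ : π₂.natDegree ≤ n₂ * (n₁ - 1) := by
    rw [hπ₂def]
    apply natDegree_sum_le_of_forall_le
    intro j hj
    rw [natDegree_X_pow]
    have := Finset.mem_range.mp hj
    exact Nat.mul_le_mul_left n₂ (by omega)
  have hiden : c = π₂ * w₂ + π₁ * w₁ + (X ^ n - 1) * (q₂ + q₁) := by
    linear_combination hk - g * k * hab + a * k * hge₁ + b * k * hge₂ - π₂ * r₂ - π₁ * r₁ +
      q₂ * hπ₂ + q₁ * hπ₁
  have hq0 : q₂ + q₁ = 0 := by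
    by_contra hs
    have hrw : (X ^ n - 1 : F[X]) * (q₂ + q₁) = c - π₂ * w₂ - π₁ * w₁ := by
      linear_combination -hiden
    have hb1 : (π₂ * w₂).natDegree < n := by
      have := natDegree_mul_le (p := π₂) (q := w₂)
      have h5 : n₂ * (n₁ - 1) + (n₂ - 1) < n := by
        have : n₂ * (n₁ - 1) + n₂ = n₂ * n₁ := by
          cases n₁ with
          | zero => omega
          | succ t => rw [Nat.add_sub_cancel]; ring
        have hc : n₂ * n₁ = n := by rw [hn, mul_comm]
        omega
      omega
    have hb2 : (π₁ * w₁).natDegree < n := by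
      have := natDegree_mul_le (p := π₁) (q := w₁)
      have h5 : n₁ * (n₂ - 1) + (n₁ - 1) < n := by
        have : n₁ * (n₂ - 1) + n₁ = n₁ * n₂ := by
          cases n₂ with
          | zero => omega
          | succ t => rw [Nat.add_sub_cancel]; ring
        omega
      omega
    have hlt : (c - π₂ * w₂ - π₁ * w₁).natDegree < n := by
      have t1 := natDegree_sub_le (c - π₂ * w₂) (π₁ * w₁)
      have t2 := natDegree_sub_le c (π₂ * w₂)
      omega
    have hXn : ((X ^ n - 1 : F[X]) * (q₂ + q₁)).natDegree = n + (q₂ + q₁).natDegree := by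
      rw [natDegree_mul nen hs]
      congr 1
      rw [← C_1, natDegree_X_pow_sub_C]
    rw [hrw] at hXn
    omega
  have hc : c = π₂ * w₂ + π₁ * w₁ := by
    rw [hiden, hq0, mul_zero, add_zero]
  refine ⟨w₁, w₂, fun i hi => ?_⟩
  have hi₁ : i < n₁ * n₂ := hn ▸ hi
  have hi₂ : i < n₂ * n₁ := by rwa [mul_comm n₂ n₁]
  rw [hc, coeff_add, hπ₁def, hπ₂def, coeff_comb h₂ w₂ hvan₂ hi₂, coeff_comb h₁ w₁ hvan₁ hi₁,
    add_comm]

private lemma array_bound {α : Type*} [AddGroup α] [DecidableEq α] {m k : ℕ}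
    [NeZero m] [NeZero k] (v : ZMod m → α) (u : ZMod k → α)
    (hne : ∃ a b, v a + u b ≠ 0) :
    min m k ≤ (Finset.univ.filter
      (fun ab : ZMod m × ZMod k => v ab.1 + u ab.2 ≠ 0)).card := by
  by_cases hconst : ∀ a a' : ZMod m, v a = v a'
  · obtain ⟨a₀, b₀, h0⟩ := hne
    have hsub : (Finset.univ.image fun a : ZMod m => (a, b₀)) ⊆
        Finset.univ.filter (fun ab : ZMod m × ZMod k => v ab.1 + u ab.2 ≠ 0) := by
      intro x hx
      simp only [Finset.mem_image, Finset.mem_univ, true_and] at hx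
      obtain ⟨a, rfl⟩ := hx
      simp only [Finset.mem_filter, Finset.mem_univ, true_and]
      rw [hconst a a₀]
      exact h0
    have h1 : min m k ≤ m := min_le_left _ _
    have h2 : (Finset.univ.image fun a : ZMod m => (a, b₀)).card = m := by
      rw [Finset.card_image_of_injective _ (fun a a' h => (Prod.mk.injEq _ _ _ _).mp h |>.1),
        Finset.card_univ, ZMod.card]
    have h3 := Finset.card_le_card hsub
    omega
  · push_neg at hconst
    obtain ⟨a₁, a₂, hv⟩ := hconst
    set f : ZMod k → ZMod m × ZMod k := fun b => if v a₁ + u b ≠ 0 then (a₁, b) else (a₂, b) with hf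
    have hsnd : ∀ b, (f b).2 = b := by
      intro b
      simp only [hf, apply_ite Prod.snd]
      split_ifs <;> rfl
    have hmaps : ∀ b ∈ (Finset.univ : Finset (ZMod k)), f b ∈
        Finset.univ.filter (fun ab : ZMod m × ZMod k => v ab.1 + u ab.2 ≠ 0) := by
      intro b _
      simp only [Finset.mem_filter, Finset.mem_univ, true_and, hf]
      split_ifs with h
      · exact h
      · push_neg at h
        intro h2
        exact hv (add_right_cancel (h.trans h2.symm))
    have hinj : Set.InjOn f ↑(Finset.univ : Finset (ZMod k)) := by
      intro b _ b' _ hbb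
      have := congrArg Prod.snd hbb
      rwa [hsnd, hsnd] at this
    have h1 : min m k ≤ k := min_le_right _ _
    have h2 := Finset.card_le_card_of_injOn f hmaps hinj
    rw [Finset.card_univ, ZMod.card] at h2
    omega

private lemma cast_prime_ne_zero {F : Type*} [Field F] [Fintype F] {p n q : ℕ}
    (hp : p.Prime) (hdvd : p ∣ n) (hq : Fintype.card F = q) (hcop : Nat.Coprime n q) :
    (p : F) ≠ 0 := by
  intro h
  haveI : Fact p.Prime := ⟨hp⟩
  have h1 : ringChar F ∣ p := (CharP.cast_eq_zero_iff F (ringChar F) p).mp h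
  have h2 : ringChar F = p := by
    rcases (Nat.Prime.eq_one_or_self_of_dvd hp _ h1) with h' | h'
    · exact absurd h' (CharP.char_is_prime F (ringChar F)).ne_one
    · exact h'
  have h3 : p ∣ Fintype.card F := (prime_dvd_char_iff_dvd_card p).mp (h2 ▸ dvd_refl p)
  rw [hq] at h3
  have : p ∣ Nat.gcd n q := Nat.dvd_gcd hdvd h3
  rw [hcop] at this
  exact hp.one_lt.ne' (Nat.dvd_one.mp this)

private lemma geom_coprime {F : Type*} [Field F] {n₁ n₂ : ℕ}
    (h₁ : 0 < n₁) (h₂ : 0 < n₂) (hcop : Nat.Coprime n₁ n₂)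
    (hc₁ : (n₁ : F) ≠ 0) (hc₂ : (n₂ : F) ≠ 0) :
    IsCoprime (∑ i ∈ Finset.range n₁, (X : F[X]) ^ i)
      (∑ i ∈ Finset.range n₂, (X : F[X]) ^ i) := by
  classical
  set e₁ : F[X] := ∑ i ∈ Finset.range n₁, X ^ i with he₁
  set e₂ : F[X] := ∑ i ∈ Finset.range n₂, X ^ i with he₂
  rw [← EuclideanDomain.gcd_isUnit_iff]
  set d := EuclideanDomain.gcd e₁ e₂ with hd
  have hd1 : d ∣ e₁ := EuclideanDomain.gcd_dvd_left _ _
  have hd2 : d ∣ e₂ := EuclideanDomain.gcd_dvd_right _ _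
  have hdp1 : d ∣ X ^ n₁ - 1 := hd1.trans ⟨X - 1, (geom_sum_mul X n₁).symm⟩
  have hdp2 : d ∣ X ^ n₂ - 1 := hd2.trans ⟨X - 1, (geom_sum_mul X n₂).symm⟩
  -- d divides X - 1
  have hdX : d ∣ X - 1 := by
    set I : Ideal F[X] := Ideal.span {d} with hI
    set x : F[X] ⧸ I := Ideal.Quotient.mk I X with hx
    have hpow : ∀ t : ℕ, d ∣ X ^ t - 1 → x ^ t = 1 := by
      intro t ht
      have : Ideal.Quotient.mk I (X ^ t) = Ideal.Quotient.mk I 1 :=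
        Ideal.Quotient.eq.mpr (Ideal.mem_span_singleton.mpr ht)
      rw [map_pow, map_one] at this
      exact this
    have ho1 : orderOf x ∣ n₁ := orderOf_dvd_of_pow_eq_one (hpow n₁ hdp1)
    have ho2 : orderOf x ∣ n₂ := orderOf_dvd_of_pow_eq_one (hpow n₂ hdp2)
    have : orderOf x ∣ Nat.gcd n₁ n₂ := Nat.dvd_gcd ho1 ho2
    rw [hcop, Nat.dvd_one] at this
    have hx1 : x = 1 := orderOf_eq_one_iff.mp this
    have : Ideal.Quotient.mk I (X - 1) = 0 := by
      rw [map_sub, map_one, ← hx, hx1, sub_self]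
    exact Ideal.mem_span_singleton.mp (Ideal.Quotient.eq_zero_iff_mem.mp this)
  -- eval at 1
  have heval : d.eval 1 ∣ (n₁ : F) := by
    obtain ⟨t, ht⟩ := hd1
    refine ⟨t.eval 1, ?_⟩
    have := congrArg (Polynomial.eval (1 : F)) ht
    rw [he₁] at this
    simpa [eval_finset_sum] using this
  have hdeval : d.eval 1 ≠ 0 := by
    intro h
    rw [h] at heval
    exact hc₁ (zero_dvd_iff.mp heval)
  obtain ⟨t, ht⟩ := hdX
  have hirr : Irreducible (X - 1 : F[X]) := by
    have := Polynomial.irreducible_X_sub_C (1 : F)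
    rwa [Polynomial.C_1] at this
  rcases hirr.isUnit_or_isUnit ht with h | h
  · exact h
  · exfalso
    have := congrArg (Polynomial.eval (1 : F)) ht
    simp only [eval_sub, eval_X, eval_one, sub_self, eval_mul] at this
    obtain ⟨r, hr, hrd⟩ := Polynomial.isUnit_iff.mp h
    rw [← hrd, eval_C] at this
    have hr0 : r ≠ 0 := hr.ne_zero
    have : d.eval 1 = 0 := by
      rcases mul_eq_zero.mp this.symm with h' | h'
      · exact h'
      · exact absurd h' hr0
    exact hdeval this

private lemma dim_part {F : Type*} [Field F] {n₁ n₂ n : ℕ} (h₁ : 2 ≤ n₁) (h₂ : 2 ≤ n₂)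
    (hn : n = n₁ * n₂)
    (g : F[X]) (hg : g * ((X ^ n₁ - 1) * (X ^ n₂ - 1)) = (X ^ n - 1) * (X - 1)) :
    Module.finrank F
      (Submodule.span F {c : F[X] | g ∣ c ∧ c.natDegree < n}) = n₁ + n₂ - 1 := by
  have hn0 : 0 < n := hn ▸ Nat.mul_pos (by omega) (by omega)
  set K := n₁ + n₂ - 1 with hK
  have ne₁ : (X ^ n₁ - 1 : F[X]) ≠ 0 := by
    have := X_pow_sub_C_ne_zero (show 0 < n₁ by omega) (1 : F); rwa [C_1] at this
  have ne₂ : (X ^ n₂ - 1 : F[X]) ≠ 0 := by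
    have := X_pow_sub_C_ne_zero (show 0 < n₂ by omega) (1 : F); rwa [C_1] at this
  have nen : (X ^ n - 1 : F[X]) ≠ 0 := by
    have := X_pow_sub_C_ne_zero hn0 (1 : F); rwa [C_1] at this
  have neX : (X - 1 : F[X]) ≠ 0 := by
    have := X_sub_C_ne_zero (1 : F); rwa [C_1] at this
  have hg0 : g ≠ 0 := by
    intro h
    rw [h, zero_mul] at hg
    exact (mul_ne_zero nen neX) hg.symm
  have hndX : ∀ t : ℕ, ((X : F[X]) ^ t - 1).natDegree = t := by
    intro t
    rw [← C_1, natDegree_X_pow_sub_C]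
  have hdg : g.natDegree + (n₁ + n₂) = n + 1 := by
    have := congrArg natDegree hg
    rw [natDegree_mul hg0 (mul_ne_zero ne₁ ne₂), natDegree_mul ne₁ ne₂,
      natDegree_mul nen neX, hndX, hndX, hndX] at this
    have hX1 : (X - 1 : F[X]).natDegree = 1 := by
      have := natDegree_X_sub_C (1 : F); rwa [C_1] at this
    rw [hX1] at this
    omega
  set φ : F[X] →ₗ[F] F[X] := LinearMap.mulLeft F g with hφ
  have hinj : Function.Injective φ := by
    intro x y h
    simp only [hφ, LinearMap.mulLeft_apply] at h
    exact mul_left_cancel₀ hg0 h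
  have hset : {c : F[X] | g ∣ c ∧ c.natDegree < n} =
      ↑(Submodule.map φ (Polynomial.degreeLT F K)) := by
    ext c
    simp only [Set.mem_setOf_eq, SetLike.mem_coe, Submodule.mem_map, Polynomial.mem_degreeLT,
      hφ, LinearMap.mulLeft_apply]
    constructor
    · rintro ⟨⟨k, rfl⟩, hdeg⟩
      refine ⟨k, ?_, rfl⟩
      by_cases hk0 : k = 0
      · rw [hk0]
        rw [degree_zero]
        exact WithBot.bot_lt_coe K
      · rw [natDegree_mul hg0 hk0] at hdeg
        exact (natDegree_lt_iff_degree_lt hk0).mp (by omega)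
    · rintro ⟨x, hx, rfl⟩
      refine ⟨Dvd.intro x rfl, ?_⟩
      by_cases hx0 : x = 0
      · rw [hx0, mul_zero]
        simpa using hn0
      · rw [natDegree_mul hg0 hx0]
        have := (natDegree_lt_iff_degree_lt hx0).mpr hx
        omega
  rw [hset, Submodule.span_eq]
  rw [← LinearEquiv.finrank_eq (Submodule.equivMapOfInjective φ hinj (Polynomial.degreeLT F K))]
  rw [LinearEquiv.finrank_eq (Polynomial.degreeLTEquiv F K)]
  exact Module.finrank_fin_fun F

private lemma exists_min_word {F : Type*} [Field F] {n₁ n₂ n : ℕ}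
    (h₁ : 0 < n₁) (h₂ : 0 < n₂) (hn : n = n₁ * n₂)
    (g : F[X]) (hg : g * ((X ^ n₁ - 1) * (X ^ n₂ - 1)) = (X ^ n - 1) * (X - 1)) :
    ∃ c : F[X], g ∣ c ∧ c.natDegree < n ∧ c ≠ 0 ∧ c.support.card = min n₁ n₂ := by
  have hn0 : 0 < n := hn ▸ Nat.mul_pos h₁ h₂
  set m := min n₁ n₂ with hm
  set M := max n₁ n₂ with hM
  have hm0 : 0 < m := lt_min h₁ h₂
  have hM0 : 0 < M := lt_of_lt_of_le h₁ (le_max_left _ _)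
  have hmM : m * M = n := by rw [hm, hM, min_mul_max, hn]
  have hfac : ((X : F[X]) ^ m - 1) * (X ^ M - 1) = (X ^ n₁ - 1) * (X ^ n₂ - 1) := by
    rcases le_total n₁ n₂ with h | h
    · rw [hm, hM, min_eq_left h, max_eq_right h]
    · rw [hm, hM, min_eq_right h, max_eq_left h, mul_comm]
  set c : F[X] := ∑ j ∈ Finset.range m, X ^ (M * j) with hc
  have hcM : c * ((X : F[X]) ^ M - 1) = X ^ n - 1 := by
    have := geom_sum_mul ((X : F[X]) ^ M) m
    simp_rw [← pow_mul] at this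
    rw [hc, this, mul_comm M m, hmM]
  set e : F[X] := ∑ i ∈ Finset.range m, X ^ i with he
  have hgeo : e * ((X : F[X]) - 1) = X ^ m - 1 := geom_sum_mul X m
  have hfne : ((X : F[X]) ^ n₁ - 1) * (X ^ n₂ - 1) ≠ 0 := by
    apply mul_ne_zero
    · have := X_pow_sub_C_ne_zero h₁ (1 : F); rwa [C_1] at this
    · have := X_pow_sub_C_ne_zero h₂ (1 : F); rwa [C_1] at this
  have hdvd : g ∣ c := by
    refine ⟨e, mul_right_cancel₀ hfne ?_⟩
    linear_combination (-c) * hfac + ((X : F[X]) ^ m - 1) * hcM - ((X : F[X]) ^ n - 1) * hgeo -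
      e * hg
  have hcoeff : ∀ i, i < n → c.coeff i = if i % M = 0 then 1 else 0 := by
    intro i hi
    have hi' : i < M * m := by rw [mul_comm M m, hmM]; exact hi
    have h1 : ∀ t, M ≤ t → (1 : F[X]).coeff t = 0 := by
      intro t ht
      rw [coeff_one, if_neg (by omega)]
    have := coeff_comb hM0 (1 : F[X]) h1 hi'
    rw [← mul_one c, hc] at *
    rw [this, coeff_one]
  have hnd : c.natDegree < n := by
    have hb : c.natDegree ≤ M * (m - 1) := by
      rw [hc]
      apply natDegree_sum_le_of_forall_le
      intro j hj
      rw [natDegree_X_pow]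
      have := Finset.mem_range.mp hj
      exact Nat.mul_le_mul_left M (by omega)
    have h5 : M * (m - 1) + M = M * m := by
      have hm1 : m - 1 + 1 = m := Nat.succ_pred_eq_of_pos hm0
      calc M * (m - 1) + M = M * ((m - 1) + 1) := by ring
        _ = M * m := by rw [hm1]
    have h6 : M * m = n := by rw [mul_comm]; exact hmM
    omega
  have hc0 : c ≠ 0 := by
    intro h
    have := hcoeff 0 hn0
    rw [h, coeff_zero, Nat.zero_mod, if_pos rfl] at this
    exact one_ne_zero this.symm
  refine ⟨c, hdvd, hnd, hc0, ?_⟩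
  have hsupp : c.support = (Finset.range m).image (fun j => M * j) := by
    ext i
    simp only [mem_support_iff, Finset.mem_image, Finset.mem_range]
    constructor
    · intro hne
      by_cases hi : i < n
      · rw [hcoeff i hi] at hne
        have hmod : i % M = 0 := by
          by_contra h
          rw [if_neg h] at hne
          exact hne rfl
        refine ⟨i / M, ?_, ?_⟩
        · have := Nat.div_lt_of_lt_mul (show i < M * m by rw [mul_comm M m, hmM]; exact hi)
          exact this
        · have := Nat.mod_add_div i M
          omega
      · exfalso
        exact hne (coeff_eq_zero_of_natDegree_lt (by omega))
    · rintro ⟨j, hj, rfl⟩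
      have hin : M * j < n := by
        calc M * j < M * m := by exact (Nat.mul_lt_mul_left hM0).mpr hj
          _ = n := by rw [mul_comm]; exact hmM
      rw [hcoeff _ hin, Nat.mul_mod_right, if_pos rfl]
      exact one_ne_zero
  rw [hsupp, Finset.card_image_of_injective _ (fun a b h => Nat.eq_of_mul_eq_mul_left hM0 h),
    Finset.card_range]
/-- The cyclic code of length `n = n₁n₂` over `GF(q)` with generator polynomial
`g(x) = (x^n-1)(x-1)/((x^{n₁}-1)(x^{n₂}-1))` has dimension `n₁ + n₂ - 1` and minimum
distance `min(n₁, n₂)`. -/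
theorem cyclic_code_two_factors {F : Type*} [Field F] [Fintype F]
    (q n₁ n₂ n : ℕ) (hq : Fintype.card F = q)
    (hp₁ : n₁.Prime) (hp₂ : n₂.Prime) (ho₁ : Odd n₁) (ho₂ : Odd n₂) (hne : n₁ ≠ n₂)
    (hn : n = n₁ * n₂) (hcop : Nat.Coprime n q)
    (g : F[X]) (hg : g * ((X ^ n₁ - 1) * (X ^ n₂ - 1)) = (X ^ n - 1) * (X - 1)) :
    Module.finrank F
        (Submodule.span F {c : F[X] | g ∣ c ∧ c.natDegree < n}) = n₁ + n₂ - 1 ∧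
      (∀ c : F[X], g ∣ c → c.natDegree < n → c ≠ 0 → min n₁ n₂ ≤ c.support.card) ∧
      (∃ c : F[X], g ∣ c ∧ c.natDegree < n ∧ c ≠ 0 ∧ c.support.card = min n₁ n₂) := by
  classical
  have h₁ : 0 < n₁ := hp₁.pos
  have h₂ : 0 < n₂ := hp₂.pos
  have hn0 : 0 < n := hn ▸ Nat.mul_pos h₁ h₂
  haveI : NeZero n₁ := ⟨h₁.ne'⟩
  haveI : NeZero n₂ := ⟨h₂.ne'⟩
  have hd₁ : n₁ ∣ n := Dvd.intro n₂ hn.symm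
  have hd₂ : n₂ ∣ n := Dvd.intro_left n₁ hn.symm
  have hc₁ : (n₁ : F) ≠ 0 := cast_prime_ne_zero hp₁ hd₁ hq hcop
  have hc₂ : (n₂ : F) ≠ 0 := cast_prime_ne_zero hp₂ hd₂ hq hcop
  have hco12 : Nat.Coprime n₁ n₂ := (Nat.coprime_primes hp₁ hp₂).mpr hne
  have hcp : IsCoprime (∑ i ∈ Finset.range n₁, (X : F[X]) ^ i)
      (∑ i ∈ Finset.range n₂, (X : F[X]) ^ i) := geom_coprime h₁ h₂ hco12 hc₁ hc₂
  refine ⟨dim_part hp₁.two_le hp₂.two_le hn g hg, ?_, exists_min_word h₁ h₂ hn g hg⟩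
  intro c hdvd hdeg hc0
  obtain ⟨v, u, hvu⟩ := decomp h₁ h₂ hn hcp g hg c hdvd hdeg
  set vf : ZMod n₁ → F := fun a => v.coeff a.val with hvf
  set uf : ZMod n₂ → F := fun b => u.coeff b.val with huf
  have key : ∀ i, i < n → c.coeff i = vf (i : ZMod n₁) + uf (i : ZMod n₂) := by
    intro i hi
    rw [hvf, huf]
    simp only [ZMod.val_natCast]
    exact hvu i hi
  have hne' : ∃ a b, vf a + uf b ≠ 0 := by
    obtain ⟨i, hi⟩ := Polynomial.support_nonempty.mpr hc0
    rw [Polynomial.mem_support_iff] at hi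
    have hilt : i < n := lt_of_le_of_lt (le_natDegree_of_ne_zero hi) hdeg
    exact ⟨(i : ZMod n₁), (i : ZMod n₂), by rw [← key i hilt]; exact hi⟩
  have hbound := array_bound vf uf hne'
  set P := Finset.univ.filter (fun ab : ZMod n₁ × ZMod n₂ => vf ab.1 + uf ab.2 ≠ 0) with hP
  have hsurj : Set.SurjOn (fun i : ℕ => ((i : ZMod n₁), (i : ZMod n₂))) ↑c.support ↑P := by
    rintro ⟨x₁, x₂⟩ hx
    simp only [hP, Finset.coe_filter, Set.mem_setOf_eq, Finset.mem_univ, true_and] at hx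
    obtain ⟨k, hk₁, hk₂⟩ := Nat.chineseRemainder hco12 x₁.val x₂.val
    set i := k % n with hi
    have hilt : i < n := Nat.mod_lt k hn0
    have hcast₁ : (i : ZMod n₁) = x₁ := by
      have hx₁ : ((x₁.val : ℕ) : ZMod n₁) = x₁ := ZMod.natCast_rightInverse x₁
      rw [← hx₁, ZMod.natCast_eq_natCast_iff']
      have e1 : i % n₁ = k % n₁ := Nat.mod_mod_of_dvd k hd₁
      exact e1.trans hk₁
    have hcast₂ : (i : ZMod n₂) = x₂ := by
      have hx₂ : ((x₂.val : ℕ) : ZMod n₂) = x₂ := ZMod.natCast_rightInverse x₂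
      rw [← hx₂, ZMod.natCast_eq_natCast_iff']
      have e1 : i % n₂ = k % n₂ := Nat.mod_mod_of_dvd k hd₂
      exact e1.trans hk₂
    refine ⟨i, ?_, ?_⟩
    · rw [Finset.mem_coe, Polynomial.mem_support_iff, key i hilt, hcast₁, hcast₂]
      exact hx
    · simp only [hcast₁, hcast₂]
  have hcard : P.card ≤ c.support.card :=
    Finset.card_le_card_of_surjOn _ hsurj
  omega
end
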